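/- arXiv:1612.05833 — 3 statements merged into one kernel-verified Lean document; each statement's English description precedes it below -/
import Mathlib

section
/- Suppose G is a finite graph on vertex set X, f : X → ℝ, and c is a capacity function for G. Then G has an f-flow bounded by c if and only if for every set F ⊆ X: −∑_{(x,y) edge of G, x ∉ F, y ∈ F} c(x,y) ≤ ∑_{x ∈ F} f(x) ≤ ∑_{(x,y) edge of G, x ∈ F, y ∉ F} c(x,y). -/
open Finset

/-- An `f`-flow on a locally finite graph `G`: a function on oriented edges, antisymmetric
on edges, whose net outflow at each vertex `x` equals `f x`. -/
def IsFlow {X : Type*} (G : SimpleGraph X) [G.LocallyFinite] (f : X → ℝ)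
    (φ : X → X → ℝ) : Prop :=
  (∀ x y, G.Adj x y → φ x y = -φ y x) ∧
  (∀ x, ∑ y ∈ G.neighborFinset x, φ x y = f x)


set_option linter.unusedSectionVars false
set_option maxHeartbeats 1000000

section AuxFlowProof
variable {X : Type*} [Fintype X] [DecidableEq X]
variable (G : SimpleGraph X) [DecidableRel G.Adj]

lemma pairSum_eq (P : X × X → Prop) [DecidablePred P] (φ : X → X → ℝ) :
    ∑ p ∈ (Finset.univ ×ˢ Finset.univ).filter P, φ p.1 p.2
      = ∑ x, ∑ y, if P (x, y) then φ x y else 0 := by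
  rw [Finset.sum_filter, Finset.sum_product]

lemma internal_zero (φ : X → X → ℝ) (hskew : ∀ x y, G.Adj x y → φ x y = -φ y x)
    (F : Finset X) :
    ∑ x, ∑ y, (if (G.Adj x y ∧ x ∈ F ∧ y ∈ F) then φ x y else 0) = 0 := by
  rw [← Finset.sum_product' (f := fun x y => if (G.Adj x y ∧ x ∈ F ∧ y ∈ F) then φ x y else 0)]
  apply Finset.sum_ninvolution Prod.swap
  · intro p
    by_cases h : G.Adj p.1 p.2 ∧ p.1 ∈ F ∧ p.2 ∈ F
    · have h' : G.Adj p.2 p.1 ∧ p.2 ∈ F ∧ p.1 ∈ F := ⟨h.1.symm, h.2.2, h.2.1⟩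
      simp only [Prod.fst_swap, Prod.snd_swap, if_pos h, if_pos h']
      rw [hskew _ _ h.1]; ring
    · have h' : ¬(G.Adj p.2 p.1 ∧ p.2 ∈ F ∧ p.1 ∈ F) := by
        intro h'; exact h ⟨h'.1.symm, h'.2.2, h'.2.1⟩
      simp [h, h']
  · intro p hp
    have hadj : G.Adj p.1 p.2 := by by_contra hadj; simp [hadj] at hp
    intro hh
    have h12 : p.2 = p.1 := congrArg Prod.fst hh
    exact G.ne_of_adj hadj h12.symm
  · intro a; simp
  · intro a; simp

lemma div_sum_eq_cut (φ : X → X → ℝ) (hskew : ∀ x y, G.Adj x y → φ x y = -φ y x)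
    (F : Finset X) :
    ∑ x ∈ F, ∑ y ∈ G.neighborFinset x, φ x y
      = ∑ p ∈ (Finset.univ ×ˢ Finset.univ).filter
          (fun p : X × X => G.Adj p.1 p.2 ∧ p.1 ∈ F ∧ p.2 ∉ F), φ p.1 p.2 := by
  rw [pairSum_eq]
  have lhs1 : ∑ x ∈ F, ∑ y ∈ G.neighborFinset x, φ x y
      = ∑ x, ∑ y, if (G.Adj x y ∧ x ∈ F) then φ x y else 0 := by
    calc ∑ x ∈ F, ∑ y ∈ G.neighborFinset x, φ x y
        = ∑ x ∈ F, ∑ y, if G.Adj x y then φ x y else 0 := by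
          refine Finset.sum_congr rfl fun x _ => ?_
          rw [SimpleGraph.neighborFinset_eq_filter, Finset.sum_filter]
      _ = ∑ x, if x ∈ F then (∑ y, if G.Adj x y then φ x y else 0) else 0 := by
          rw [← Finset.sum_filter, Finset.filter_univ_mem]
      _ = ∑ x, ∑ y, if (G.Adj x y ∧ x ∈ F) then φ x y else 0 := by
          refine Finset.sum_congr rfl fun x _ => ?_
          by_cases hx : x ∈ F
          · simp [hx]
          · simp [hx]
  rw [lhs1]
  have split : ∀ x y : X, (if (G.Adj x y ∧ x ∈ F) then φ x y else 0)
      = (if (G.Adj x y ∧ x ∈ F ∧ y ∉ F) then φ x y else 0)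
        + (if (G.Adj x y ∧ x ∈ F ∧ y ∈ F) then φ x y else 0) := by
    intro x y
    by_cases hy : y ∈ F <;> by_cases hx : x ∈ F <;> by_cases ha : G.Adj x y <;>
      simp [hx, hy, ha]
  calc ∑ x, ∑ y, (if (G.Adj x y ∧ x ∈ F) then φ x y else 0)
      = ∑ x, ∑ y, ((if (G.Adj x y ∧ x ∈ F ∧ y ∉ F) then φ x y else 0)
          + (if (G.Adj x y ∧ x ∈ F ∧ y ∈ F) then φ x y else 0)) := by
        exact Finset.sum_congr rfl fun x _ => Finset.sum_congr rfl fun y _ => split x y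
    _ = (∑ x, ∑ y, (if (G.Adj x y ∧ x ∈ F ∧ y ∉ F) then φ x y else 0))
          + ∑ x, ∑ y, (if (G.Adj x y ∧ x ∈ F ∧ y ∈ F) then φ x y else 0) := by
        rw [← Finset.sum_add_distrib]
        exact Finset.sum_congr rfl fun x _ => Finset.sum_add_distrib
    _ = ∑ x, ∑ y, (if (G.Adj x y ∧ x ∈ F ∧ y ∉ F) then φ x y else 0) := by
        rw [internal_zero G φ hskew F, add_zero]

/-- elementary flow of value `ε` along a single oriented edge `(x, y)` -/
def eflow (ε : ℝ) (x y : X) : X → X → ℝ := fun a b =>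
  if a = x ∧ b = y then ε else if a = y ∧ b = x then -ε else 0

/-- flow of value `ε` pushed along the list of vertices `p` -/
def pushL (ε : ℝ) : List X → X → X → ℝ
  | x :: y :: rest => eflow ε x y + pushL ε (y :: rest)
  | _ => 0

lemma pushL_nil (ε : ℝ) : pushL ε ([] : List X) = 0 := rfl
lemma pushL_single (ε : ℝ) (x : X) : pushL ε [x] = 0 := rfl
lemma pushL_cons_cons (ε : ℝ) (x y : X) (rest : List X) :
    pushL ε (x :: y :: rest) = eflow ε x y + pushL ε (y :: rest) := rfl

lemma eflow_skew {ε : ℝ} {x y : X} (hxy : x ≠ y) (a b : X) :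
    eflow ε x y a b = - eflow ε x y b a := by
  simp only [eflow]
  split_ifs <;> simp_all <;> first | ring | (exfalso; apply hxy; simp_all)

lemma pushL_skew {ε : ℝ} : ∀ p : List X, List.Chain' (fun x y => x ≠ y) p →
    ∀ a b, pushL ε p a b = - pushL ε p b a
  | [], _, a, b => by simp [pushL_nil]
  | [x], _, a, b => by simp [pushL_single]
  | x :: y :: rest, hc, a, b => by
    have hxy : x ≠ y := (List.isChain_cons_cons.1 hc).1
    have ih := pushL_skew (ε := ε) (y :: rest) (List.isChain_cons_cons.1 hc).2 a b
    simp only [pushL_cons_cons, Pi.add_apply]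
    rw [eflow_skew hxy, ih]; ring

lemma pushL_zero_of_not_mem {ε : ℝ} : ∀ p : List X, ∀ a b : X, a ∉ p →
    pushL ε p a b = 0
  | [], a, b, _ => by simp [pushL_nil]
  | [x], a, b, _ => by simp [pushL_single]
  | x :: y :: rest, a, b, ha => by
    have hax : a ≠ x := fun h => ha (h ▸ List.mem_cons_self)
    have hay : a ∉ y :: rest := fun h => ha (List.mem_cons_of_mem _ h)
    have hay' : a ≠ y := fun h => hay (h ▸ List.mem_cons_self)
    have ih := pushL_zero_of_not_mem (ε := ε) (y :: rest) a b hay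
    simp only [pushL_cons_cons, Pi.add_apply, ih, add_zero, eflow]
    rw [if_neg (fun h => hax h.1), if_neg (fun h => hay' h.1)]

lemma pushL_le {ε : ℝ} (hε : 0 ≤ ε) : ∀ p : List X, p.Nodup → ∀ a b : X,
    pushL ε p a b ≤ if (a, b) ∈ p.zip p.tail then ε else 0
  | [], _, a, b => by simp [pushL_nil]
  | [x], _, a, b => by simp [pushL_single]
  | x :: y :: rest, hnd, a, b => by
    have hnd' : (y :: rest).Nodup := hnd.of_cons
    have hx : x ∉ y :: rest := (List.nodup_cons.1 hnd).1
    have hzip : (x :: y :: rest).zip (x :: y :: rest).tail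
        = (x, y) :: ((y :: rest).zip (y :: rest).tail) := rfl
    rw [hzip]
    simp only [pushL_cons_cons, Pi.add_apply]
    by_cases h1 : a = x ∧ b = y
    · have h0 : pushL ε (y :: rest) a b = 0 := by
        rw [h1.1]; exact pushL_zero_of_not_mem _ _ _ hx
      have he : eflow ε x y a b = ε := by simp [eflow, h1]
      have hm : (a, b) ∈ (x, y) :: ((y :: rest).zip (y :: rest).tail) :=
        List.mem_cons.2 (Or.inl (by rw [h1.1, h1.2]))
      rw [h0, he, if_pos hm, add_zero]
    · have he : eflow ε x y a b ≤ 0 := by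
        simp only [eflow]
        rw [if_neg h1]
        split_ifs <;> linarith
      have ih := pushL_le (ε := ε) hε (y :: rest) hnd' a b
      have hmem : ((a, b) ∈ (x, y) :: ((y :: rest).zip (y :: rest).tail))
          ↔ (a, b) ∈ (y :: rest).zip (y :: rest).tail := by
        constructor
        · intro h; rcases List.mem_cons.1 h with h | h
          · exact absurd ⟨(Prod.ext_iff.1 h).1, (Prod.ext_iff.1 h).2⟩ h1
          · exact h
        · exact List.mem_cons_of_mem _
      rw [if_congr hmem rfl rfl]
      calc eflow ε x y a b + pushL ε (y :: rest) a b
          ≤ 0 + pushL ε (y :: rest) a b := by linarith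
        _ ≤ if (a, b) ∈ (y :: rest).zip (y :: rest).tail then ε else 0 := by
            rw [zero_add]; exact ih

lemma zip_rel {r : X → X → Prop} : ∀ p : List X, List.Chain' r p → ∀ a b : X,
    (a, b) ∈ p.zip p.tail → r a b
  | [], _, a, b, h => by simp at h
  | [x], _, a, b, h => by simp at h
  | x :: y :: rest, hc, a, b, h => by
    rcases List.mem_cons.1 h with h | h
    · obtain ⟨rfl, rfl⟩ : a = x ∧ b = y := ⟨(Prod.ext_iff.1 h).1, (Prod.ext_iff.1 h).2⟩
      exact (List.isChain_cons_cons.1 hc).1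
    · exact zip_rel (y :: rest) (List.isChain_cons_cons.1 hc).2 a b h


lemma div_eflow {ε : ℝ} {x y : X} (h : G.Adj x y) (v : X) :
    ∑ w ∈ G.neighborFinset v, eflow ε x y v w
      = (if v = x then ε else 0) - (if v = y then ε else 0) := by
  have hxy : x ≠ y := G.ne_of_adj h
  by_cases hvx : v = x
  · subst hvx
    have hvy : v ≠ y := hxy
    have h1 : ∀ w ∈ G.neighborFinset v, eflow ε v y v w = if w = y then ε else 0 := by
      intro w _
      simp only [eflow, true_and]
      rw [if_neg (fun hh : v = y ∧ w = v => hvy hh.1)]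
    rw [Finset.sum_congr rfl h1, Finset.sum_ite_eq' (G.neighborFinset v) y (fun _ => ε),
      if_pos ((G.mem_neighborFinset v y).2 h), if_pos rfl, if_neg hvy, sub_zero]
  · by_cases hvy : v = y
    · subst hvy
      have h1 : ∀ w ∈ G.neighborFinset v, eflow ε x v v w = if w = x then -ε else 0 := by
        intro w _
        simp only [eflow]
        rw [if_neg (fun hh : v = x ∧ w = v => hvx hh.1)]
        simp
      rw [Finset.sum_congr rfl h1, Finset.sum_ite_eq' (G.neighborFinset v) x (fun _ => -ε),
        if_pos ((G.mem_neighborFinset v x).2 h.symm), if_neg hvx, if_pos rfl]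
      ring
    · have h1 : ∀ w ∈ G.neighborFinset v, eflow ε x y v w = 0 := by
        intro w _
        simp only [eflow]
        rw [if_neg (fun hh : v = x ∧ w = y => hvx hh.1),
          if_neg (fun hh : v = y ∧ w = x => hvy hh.1)]
      rw [Finset.sum_congr rfl h1, Finset.sum_const_zero, if_neg hvx, if_neg hvy, sub_zero]

lemma div_pushL {ε : ℝ} : ∀ p : List X, List.Chain' G.Adj p → ∀ v : X,
    ∑ w ∈ G.neighborFinset v, pushL ε p v w
      = (if p.head? = some v then ε else 0) - (if p.getLast? = some v then ε else 0)
  | [], _, v => by simp [pushL]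
  | [x], _, v => by simp [pushL]
  | x :: y :: rest, hc, v => by
    have hadj : G.Adj x y := (List.isChain_cons_cons.1 hc).1
    have ih := div_pushL (ε := ε) (y :: rest) (List.isChain_cons_cons.1 hc).2 v
    simp only [pushL_cons_cons, Pi.add_apply]
    rw [Finset.sum_add_distrib, div_eflow G hadj v, ih]
    have h1 : (x :: y :: rest).head? = some x := rfl
    have h2 : (y :: rest).head? = some y := rfl
    have h3 : (x :: y :: rest).getLast? = (y :: rest).getLast? := List.getLast?_cons_cons
    rw [h1, h2, h3]
    have e1 : (if (some x : Option X) = some v then ε else 0) = (if v = x then ε else 0) := by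
      simp [eq_comm]
    have e2 : (if (some y : Option X) = some v then ε else 0) = (if v = y then ε else 0) := by
      simp [eq_comm]
    rw [e1, e2]; ring

lemma nod_decomp : ∀ p : List X, ¬p.Nodup →
    ∃ (a b : List X) (x : X), p = a ++ x :: b ∧ x ∈ b := by
  intro p
  induction p with
  | nil => intro h; exact absurd List.nodup_nil h
  | cons y rest ih =>
    intro h
    by_cases hy : y ∈ rest
    · exact ⟨[], rest, y, rfl, hy⟩
    · have : ¬rest.Nodup := fun hh => h (List.nodup_cons.2 ⟨hy, hh⟩)
      obtain ⟨a, b, x, rfl, hx⟩ := ih this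
      exact ⟨y :: a, b, x, rfl, hx⟩

lemma exists_nodup_chain' {r : X → X → Prop} :
    ∀ n : ℕ, ∀ p : List X, p.length ≤ n → List.Chain' r p →
    ∃ q : List X, List.Chain' r q ∧ q.Nodup ∧ q.head? = p.head? ∧ q.getLast? = p.getLast? := by
  intro n
  induction n with
  | zero =>
    intro p hp _
    have : p = [] := List.length_eq_zero_iff.1 (Nat.le_zero.1 hp)
    exact ⟨p, by rw [this]; exact List.isChain_nil, by simp [this], rfl, rfl⟩
  | succ n ih =>
    intro p hp hc
    by_cases hnd : p.Nodup
    · exact ⟨p, hc, hnd, rfl, rfl⟩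
    · obtain ⟨a, b, x, rfl, hx⟩ := nod_decomp _ hnd
      obtain ⟨b1, b2, rfl⟩ := List.append_of_mem hx
      have hcast : a ++ x :: (b1 ++ x :: b2) = a ++ x :: b1 ++ x :: b2 := by simp
      have h1 : List.Chain' r (a ++ [x]) ∧ List.Chain' r (x :: (b1 ++ x :: b2)) :=
        List.isChain_split.1 hc
      have h2 : List.Chain' r ((x :: b1) ++ x :: b2) := by
        simpa using h1.2
      have h4 : List.Chain' r (x :: b2) := (List.isChain_split.1 h2).2
      have hq0 : List.Chain' r (a ++ x :: b2) := List.isChain_split.2 ⟨h1.1, h4⟩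
      have hlen : (a ++ x :: b2).length ≤ n := by
        have := hp
        simp only [List.length_append, List.length_cons] at this ⊢
        omega
      obtain ⟨q, hqc, hqnd, hqh, hql⟩ := ih (a ++ x :: b2) hlen hq0
      refine ⟨q, hqc, hqnd, ?_, ?_⟩
      · rw [hqh]; cases a <;> simp
      · rw [hql, List.getLast?_append_cons, List.getLast?_append_cons,
          ← List.cons_append, List.getLast?_append_cons]


/-- the set of feasible antisymmetric functions bounded by `c` -/
def Sset (c : X → X → ℝ) : Set (X → X → ℝ) :=
  {φ | (∀ x y, G.Adj x y → φ x y = -φ y x) ∧ (∀ x y, G.Adj x y → φ x y ≤ c x y) ∧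
    ∀ x y, ¬G.Adj x y → φ x y = 0}

/-- excess of `φ` at a vertex -/
def excF (f : X → ℝ) (φ : X → X → ℝ) (x : X) : ℝ :=
  f x - ∑ y ∈ G.neighborFinset x, φ x y

/-- total positive excess -/
def Dfun (f : X → ℝ) (φ : X → X → ℝ) : ℝ := ∑ x, max (excF G f φ x) 0

lemma Sset_nonempty (c : X → X → ℝ) (hc : ∀ x y, G.Adj x y → 0 ≤ c x y) :
    (Sset G c).Nonempty := by
  refine ⟨fun x y => if G.Adj x y then (c x y - c y x) / 2 else 0, ?_, ?_, ?_⟩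
  · intro x y h; dsimp only; rw [if_pos h, if_pos h.symm]; ring
  · intro x y h; dsimp only; rw [if_pos h]
    have := hc y x h.symm; have := hc x y h; linarith
  · intro x y h; dsimp only; rw [if_neg h]

lemma Sset_isClosed (c : X → X → ℝ) : IsClosed (Sset G c) := by
  have : Sset G c = ⋂ (x : X), ⋂ (y : X),
      ({φ : X → X → ℝ | G.Adj x y → φ x y = -φ y x} ∩
       {φ | G.Adj x y → φ x y ≤ c x y} ∩ {φ | ¬G.Adj x y → φ x y = 0}) := by
    ext φ
    simp only [Sset, Set.mem_setOf_eq, Set.mem_iInter, Set.mem_inter_iff]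
    constructor
    · rintro ⟨h1, h2, h3⟩ x y; exact ⟨⟨h1 x y, h2 x y⟩, h3 x y⟩
    · intro h; exact ⟨fun x y => (h x y).1.1, fun x y => (h x y).1.2, fun x y => (h x y).2⟩
  rw [this]
  refine isClosed_iInter fun x => isClosed_iInter fun y => ?_
  have hcont : Continuous fun φ : X → X → ℝ => φ x y :=
    (continuous_apply y).comp (continuous_apply x)
  have hcont' : Continuous fun φ : X → X → ℝ => φ y x :=
    (continuous_apply x).comp (continuous_apply y)
  refine IsClosed.inter (IsClosed.inter ?_ ?_) ?_
  · by_cases h : G.Adj x y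
    · simp only [h, forall_true_left]
      exact isClosed_eq hcont (hcont'.neg)
    · have : {φ : X → X → ℝ | G.Adj x y → φ x y = -φ y x} = Set.univ := by
        ext φ; simp [h]
      rw [this]; exact isClosed_univ
  · by_cases h : G.Adj x y
    · simp only [h, forall_true_left]
      exact isClosed_le hcont continuous_const
    · have : {φ : X → X → ℝ | G.Adj x y → φ x y ≤ c x y} = Set.univ := by
        ext φ; simp [h]
      rw [this]; exact isClosed_univ
  · by_cases h : G.Adj x y
    · have : {φ : X → X → ℝ | ¬G.Adj x y → φ x y = 0} = Set.univ := by
        ext φ; simp [h]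
      rw [this]; exact isClosed_univ
    · simp only [h, not_false_iff, forall_true_left]
      exact isClosed_eq hcont continuous_const

lemma Sset_isCompact (c : X → X → ℝ) : IsCompact (Sset G c) := by
  have hbox : IsCompact (Set.pi Set.univ (fun x : X => Set.pi Set.univ
      (fun y : X => Set.Icc (-(|c x y| + |c y x|)) (|c x y| + |c y x|)))) :=
    isCompact_univ_pi fun x => isCompact_univ_pi fun y => isCompact_Icc
  refine hbox.of_isClosed_subset (Sset_isClosed G c) ?_
  intro φ hφ
  rw [Set.mem_univ_pi]
  intro x
  rw [Set.mem_univ_pi]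
  intro y
  obtain ⟨h1, h2, h3⟩ := hφ
  by_cases h : G.Adj x y
  · constructor
    · have := h2 y x h.symm
      have hskew := h1 x y h
      have : -c y x ≤ φ x y := by rw [hskew]; linarith
      have h1' : -(|c x y| + |c y x|) ≤ -c y x := by
        have := abs_nonneg (c x y); have := le_abs_self (c y x); linarith
      linarith
    · have := h2 x y h
      have : c x y ≤ |c x y| + |c y x| := by
        have := abs_nonneg (c y x); have := le_abs_self (c x y); linarith
      linarith
  · rw [h3 x y h]
    constructor
    · have := abs_nonneg (c x y); have := abs_nonneg (c y x); linarith
    · have := abs_nonneg (c x y); have := abs_nonneg (c y x); linarith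

lemma Dfun_continuous (f : X → ℝ) : Continuous (Dfun G f) := by
  unfold Dfun excF
  refine continuous_finset_sum _ fun x _ => Continuous.max ?_ continuous_const
  exact continuous_const.sub (continuous_finset_sum _ fun y _ =>
    (continuous_apply y).comp (continuous_apply x))

lemma augment {c : X → X → ℝ} {f : X → ℝ} {φ : X → X → ℝ} (hφ : φ ∈ Sset G c)
    {s t : X} (p : List X)
    (hchain : List.Chain' (fun a b => G.Adj a b ∧ φ a b < c a b) p)
    (hnd : p.Nodup) (hh : p.head? = some s) (hl : p.getLast? = some t)
    (hs : 0 < excF G f φ s) (ht : excF G f φ t < 0) :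
    ∃ φ', φ' ∈ Sset G c ∧ Dfun G f φ' < Dfun G f φ := by
  classical
  have hst : s ≠ t := by rintro rfl; linarith
  -- p has at least two elements
  obtain ⟨x, y, rest, rfl⟩ : ∃ x y rest, p = x :: y :: rest := by
    rcases p with _ | ⟨a, _ | ⟨b, r⟩⟩
    · simp at hh
    · exfalso; apply hst
      simp only [List.head?_cons, Option.some_inj] at hh
      simp only [List.getLast?_singleton, Option.some_inj] at hl
      rw [← hh, ← hl]
    · exact ⟨a, b, r, rfl⟩
  set q : List X := x :: y :: rest with hq
  have hchainAdj : List.Chain' G.Adj q := List.IsChain.imp (fun a b h => h.1) hchain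
  have hchainNe : List.Chain' (fun a b => a ≠ b) q := List.IsChain.imp (fun a b h => G.ne_of_adj h.1) hchain
  set E : Finset (X × X) := (q.zip q.tail).toFinset with hE
  have hEne : E.Nonempty := ⟨(x, y), by simp [hE, hq]⟩
  set ε : ℝ := min (min (excF G f φ s) (-excF G f φ t))
    (E.inf' hEne fun e => c e.1 e.2 - φ e.1 e.2) with hεdef
  have hεs : ε ≤ excF G f φ s := le_trans (min_le_left _ _) (min_le_left _ _)
  have hεt : ε ≤ -excF G f φ t := le_trans (min_le_left _ _) (min_le_right _ _)
  have hεres : ∀ a b, (a, b) ∈ q.zip q.tail → φ a b + ε ≤ c a b := by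
    intro a b hab
    have : ε ≤ c a b - φ a b :=
      le_trans (min_le_right _ _) (Finset.inf'_le _ (List.mem_toFinset.2 hab))
    linarith
  have hεpos : 0 < ε := by
    refine lt_min (lt_min hs (by linarith)) ((Finset.lt_inf'_iff _).2 fun e he => ?_)
    have := zip_rel q hchain e.1 e.2 (by simpa using List.mem_toFinset.1 he)
    linarith [this.2]
  set φ' : X → X → ℝ := φ + pushL ε q with hφ'def
  have hexc' : ∀ v, excF G f φ' v = excF G f φ v
      - (if v = s then ε else 0) + (if v = t then ε else 0) := by
    intro v
    have hd := div_pushL G (ε := ε) q hchainAdj v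
    have hsum : ∑ w ∈ G.neighborFinset v, φ' v w
        = (∑ w ∈ G.neighborFinset v, φ v w) + ∑ w ∈ G.neighborFinset v, pushL ε q v w := by
      rw [← Finset.sum_add_distrib]; rfl
    have e1 : (if q.head? = some v then ε else 0) = (if v = s then ε else 0) := by
      rw [hh]
      by_cases hv : v = s
      · simp [hv]
      · simp [hv, Ne.symm hv]
    have e2 : (if q.getLast? = some v then ε else 0) = (if v = t then ε else 0) := by
      rw [hl]
      by_cases hv : v = t
      · simp [hv]
      · simp [hv, Ne.symm hv]
    simp only [excF, hsum, hd, e1, e2]; ring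
  refine ⟨φ', ⟨?_, ?_, ?_⟩, ?_⟩
  · -- skew
    intro a b hadj
    have h1 := hφ.1 a b hadj
    have h2 := pushL_skew (ε := ε) q hchainNe a b
    show φ a b + pushL ε q a b = -(φ b a + pushL ε q b a)
    rw [h1, h2]; ring
  · -- bounded by c
    intro a b hadj
    show φ a b + pushL ε q a b ≤ c a b
    have hle := pushL_le (ε := ε) (le_of_lt hεpos) q hnd a b
    by_cases hm : (a, b) ∈ q.zip q.tail
    · rw [if_pos hm] at hle
      have := hεres a b hm
      linarith
    · rw [if_neg hm] at hle
      have := hφ.2.1 a b hadj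
      linarith
  · -- zero on non-edges
    intro a b hnadj
    show φ a b + pushL ε q a b = 0
    have h0 := hφ.2.2 a b hnadj
    have hle := pushL_le (ε := ε) (le_of_lt hεpos) q hnd a b
    have hm : (a, b) ∉ q.zip q.tail := fun hm =>
      hnadj (zip_rel q hchainAdj a b hm)
    rw [if_neg hm] at hle
    have hle' := pushL_le (ε := ε) (le_of_lt hεpos) q hnd b a
    have hm' : (b, a) ∉ q.zip q.tail := fun hm' =>
      hnadj (zip_rel q hchainAdj b a hm').symm
    rw [if_neg hm'] at hle'
    have hskew := pushL_skew (ε := ε) q hchainNe a b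
    have : pushL ε q a b = 0 := by rw [hskew]; rw [hskew] at hle; linarith
    rw [h0, this, add_zero]
  · -- Dfun decreases
    have key : ∀ v, max (excF G f φ' v) 0
        = max (excF G f φ v) 0 - (if v = s then ε else 0) := by
      intro v
      rw [hexc' v]
      by_cases hvs : v = s
      · subst hvs
        rw [if_pos rfl, if_neg hst]
        have h1 : excF G f φ v - ε + 0 = excF G f φ v - ε := by ring
        rw [h1, max_eq_left (by linarith), max_eq_left (by linarith)]
      · rw [if_neg hvs, sub_zero, sub_zero]
        by_cases hvt : v = t
        · subst hvt
          rw [if_pos rfl, max_eq_right (by linarith), max_eq_right (by linarith)]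
        · rw [if_neg hvt]; ring_nf
    have hD : Dfun G f φ' = Dfun G f φ - ε := by
      unfold Dfun
      rw [Finset.sum_congr rfl fun v _ => key v, Finset.sum_sub_distrib,
        Finset.sum_ite_eq' Finset.univ s (fun _ => ε), if_pos (Finset.mem_univ s)]
    rw [hD]; linarith


lemma exists_flow_of_cut (f : X → ℝ) (c : X → X → ℝ)
    (hc : ∀ x y, G.Adj x y → 0 ≤ c x y)
    (h : ∀ F : Finset X,
      -(∑ p ∈ (Finset.univ ×ˢ Finset.univ).filter
          (fun p : X × X => G.Adj p.1 p.2 ∧ p.1 ∉ F ∧ p.2 ∈ F), c p.1 p.2)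
        ≤ ∑ x ∈ F, f x ∧
      ∑ x ∈ F, f x ≤
        ∑ p ∈ (Finset.univ ×ˢ Finset.univ).filter
          (fun p : X × X => G.Adj p.1 p.2 ∧ p.1 ∈ F ∧ p.2 ∉ F), c p.1 p.2) :
    ∃ φ, φ ∈ Sset G c ∧ ∀ x, ∑ y ∈ G.neighborFinset x, φ x y = f x := by
  classical
  obtain ⟨φ, hφS, hmin⟩ := (Sset_isCompact G c).exists_isMinOn (Sset_nonempty G c hc)
    ((Dfun_continuous G f).continuousOn)
  have hD : Dfun G f φ ≤ 0 := by
    by_contra hpos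
    push_neg at hpos
    obtain ⟨s, -, hs'⟩ := Finset.exists_lt_of_sum_lt
      (show ∑ _x : X, (0 : ℝ) < ∑ x, max (excF G f φ x) 0 by
        simpa [Dfun] using hpos)
    have hs : 0 < excF G f φ s := by
      rcases lt_max_iff.1 hs' with h' | h'
      · exact h'
      · exact absurd h' (lt_irrefl 0)
    set r : X → X → Prop := fun a b => G.Adj a b ∧ φ a b < c a b with hrdef
    set R : Finset X := univ.filter (fun v => Relation.ReflTransGen r s v) with hRdef
    have claim1 : ∀ t ∈ R, 0 ≤ excF G f φ t := by
      intro t htR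
      by_contra hneg
      push_neg at hneg
      have hreach : Relation.ReflTransGen r s t := (Finset.mem_filter.1 htR).2
      obtain ⟨l, hlc, hll⟩ := List.exists_isChain_cons_of_relationReflTransGen hreach
      have hchain' : List.Chain' r (s :: l) := hlc
      obtain ⟨q, hqc, hqnd, hqh, hql⟩ :=
        exists_nodup_chain' (s :: l).length (s :: l) le_rfl hchain'
      have hq_head : q.head? = some s := by rw [hqh]; rfl
      have hq_last : q.getLast? = some t := by
        rw [hql, List.getLast?_eq_getLast_of_ne_nil (List.cons_ne_nil s l), hll]
      obtain ⟨φ', hφ'S, hφ'lt⟩ := augment G hφS q hqc hqnd hq_head hq_last hs hneg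
      exact absurd (isMinOn_iff.1 hmin φ' hφ'S) (not_le.2 hφ'lt)
    have hsR : s ∈ R := Finset.mem_filter.2 ⟨Finset.mem_univ _, Relation.ReflTransGen.refl⟩
    have hdiv := div_sum_eq_cut G φ hφS.1 R
    have hsat : ∀ p ∈ (Finset.univ ×ˢ Finset.univ).filter
        (fun p : X × X => G.Adj p.1 p.2 ∧ p.1 ∈ R ∧ p.2 ∉ R), φ p.1 p.2 = c p.1 p.2 := by
      intro p hp
      have hp' := (Finset.mem_filter.1 hp).2
      obtain ⟨hadj, h1, h2⟩ := hp'
      refine le_antisymm (hφS.2.1 _ _ hadj) (not_lt.1 fun hlt => h2 ?_)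
      exact Finset.mem_filter.2 ⟨Finset.mem_univ _,
        ((Finset.mem_filter.1 h1).2).tail ⟨hadj, hlt⟩⟩
    have hfsum : ∑ x ∈ R, f x = ∑ x ∈ R, excF G f φ x
        + ∑ p ∈ (Finset.univ ×ˢ Finset.univ).filter
          (fun p : X × X => G.Adj p.1 p.2 ∧ p.1 ∈ R ∧ p.2 ∉ R), c p.1 p.2 := by
      rw [← Finset.sum_congr rfl hsat, ← hdiv, ← Finset.sum_add_distrib]
      exact Finset.sum_congr rfl fun x _ => by unfold excF; ring
    have hexcsum : excF G f φ s ≤ ∑ x ∈ R, excF G f φ x :=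
      Finset.single_le_sum claim1 hsR
    have hub := (h R).2
    linarith
  -- now Dfun φ = 0, extract the flow
  have hterm : ∀ x, max (excF G f φ x) 0 = 0 := by
    have hnn : (0 : ℝ) ≤ ∑ x, max (excF G f φ x) 0 :=
      Finset.sum_nonneg fun i _ => le_max_right _ _
    have := (Finset.sum_eq_zero_iff_of_nonneg
      (fun i (_ : i ∈ univ) => le_max_right (excF G f φ i) 0)).1 (le_antisymm hD hnn)
    exact fun x => this x (Finset.mem_univ x)
  have hexcle : ∀ x, excF G f φ x ≤ 0 := fun x =>
    (le_max_left _ _).trans (le_of_eq (hterm x))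
  have hempty1 : (Finset.univ ×ˢ Finset.univ).filter
      (fun p : X × X => G.Adj p.1 p.2 ∧ p.1 ∈ (univ : Finset X) ∧ p.2 ∉ (univ : Finset X))
      = ∅ :=
    Finset.filter_false_of_mem (fun p _ hp => hp.2.2 (Finset.mem_univ _))
  have hempty2 : (Finset.univ ×ˢ Finset.univ).filter
      (fun p : X × X => G.Adj p.1 p.2 ∧ p.1 ∉ (univ : Finset X) ∧ p.2 ∈ (univ : Finset X))
      = ∅ :=
    Finset.filter_false_of_mem (fun p _ hp => hp.2.1 (Finset.mem_univ _))
  have hf0 : ∑ x, f x = 0 := by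
    have h1 := (h univ).1
    have h2 := (h univ).2
    rw [hempty2] at h1
    rw [hempty1] at h2
    simp only [Finset.sum_empty] at h1 h2
    linarith
  have hsum0 : ∑ x, excF G f φ x = 0 := by
    have hdiv := div_sum_eq_cut G φ hφS.1 univ
    rw [hempty1, Finset.sum_empty] at hdiv
    unfold excF
    rw [Finset.sum_sub_distrib, hdiv, hf0, sub_zero]
  have hexc0 : ∀ x, excF G f φ x = 0 := by
    have := (Finset.sum_eq_zero_iff_of_nonpos
      (fun i (_ : i ∈ univ) => hexcle i)).1 hsum0
    exact fun x => this x (Finset.mem_univ x)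
  refine ⟨φ, hφS, fun x => ?_⟩
  have := hexc0 x
  unfold excF at this
  linarith
theorem finite_flow_existence_aux (f : X → ℝ) (c : X → X → ℝ)
    (hc : ∀ x y, G.Adj x y → 0 ≤ c x y) :
    (∃ φ : X → X → ℝ, IsFlow G f φ ∧ ∀ x y, G.Adj x y → φ x y ≤ c x y) ↔
    (∀ F : Finset X,
      -(∑ p ∈ (Finset.univ ×ˢ Finset.univ).filter
          (fun p : X × X => G.Adj p.1 p.2 ∧ p.1 ∉ F ∧ p.2 ∈ F), c p.1 p.2)
        ≤ ∑ x ∈ F, f x ∧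
      ∑ x ∈ F, f x ≤
        ∑ p ∈ (Finset.univ ×ˢ Finset.univ).filter
          (fun p : X × X => G.Adj p.1 p.2 ∧ p.1 ∈ F ∧ p.2 ∉ F), c p.1 p.2) := by
  constructor
  · rintro ⟨φ, ⟨hskew, hdiv⟩, hbd⟩ F
    have hf : ∑ x ∈ F, f x = ∑ p ∈ (Finset.univ ×ˢ Finset.univ).filter
        (fun p : X × X => G.Adj p.1 p.2 ∧ p.1 ∈ F ∧ p.2 ∉ F), φ p.1 p.2 := by
      rw [← div_sum_eq_cut G φ hskew F]
      exact Finset.sum_congr rfl fun x _ => (hdiv x).symm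
    constructor
    · -- lower bound via swapped cut
      have hswap : ∑ p ∈ (Finset.univ ×ˢ Finset.univ).filter
          (fun p : X × X => G.Adj p.1 p.2 ∧ p.1 ∈ F ∧ p.2 ∉ F), φ p.1 p.2
          = ∑ p ∈ (Finset.univ ×ˢ Finset.univ).filter
          (fun p : X × X => G.Adj p.1 p.2 ∧ p.1 ∉ F ∧ p.2 ∈ F), -φ p.1 p.2 := by
        refine Finset.sum_nbij' Prod.swap Prod.swap ?_ ?_ ?_ ?_ ?_
        · intro p hp
          have hp' := (Finset.mem_filter.1 hp).2
          exact Finset.mem_filter.2 ⟨Finset.mem_product.2 ⟨Finset.mem_univ _, Finset.mem_univ _⟩, hp'.1.symm, hp'.2.2, hp'.2.1⟩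
        · intro p hp
          have hp' := (Finset.mem_filter.1 hp).2
          exact Finset.mem_filter.2 ⟨Finset.mem_product.2 ⟨Finset.mem_univ _, Finset.mem_univ _⟩, hp'.1.symm, hp'.2.2, hp'.2.1⟩
        · intro p _; exact Prod.swap_swap p
        · intro p _; exact Prod.swap_swap p
        · intro p hp
          have hp' := (Finset.mem_filter.1 hp).2
          have := hskew p.1 p.2 hp'.1
          simp only [Prod.fst_swap, Prod.snd_swap]
          rw [this]
      rw [hf, hswap]
      have : ∑ p ∈ (Finset.univ ×ˢ Finset.univ).filter
          (fun p : X × X => G.Adj p.1 p.2 ∧ p.1 ∉ F ∧ p.2 ∈ F), -c p.1 p.2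
          ≤ ∑ p ∈ (Finset.univ ×ˢ Finset.univ).filter
          (fun p : X × X => G.Adj p.1 p.2 ∧ p.1 ∉ F ∧ p.2 ∈ F), -φ p.1 p.2 := by
        refine Finset.sum_le_sum fun p hp => ?_
        have hp' := (Finset.mem_filter.1 hp).2
        have := hbd p.1 p.2 hp'.1
        linarith
      rw [Finset.sum_neg_distrib] at this
      linarith
    · rw [hf]
      exact Finset.sum_le_sum fun p hp =>
        hbd p.1 p.2 ((Finset.mem_filter.1 hp).2).1
  · intro h
    obtain ⟨φ, hφS, hdiv⟩ := exists_flow_of_cut G f c hc h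
    exact ⟨φ, ⟨hφS.1, hdiv⟩, hφS.2.1⟩
end AuxFlowProof

/-- **Existence of flows in finite graphs.** A finite graph `G` has an `f`-flow bounded by
a capacity function `c` iff for every set `F` of vertices, `∑_{x ∈ F} f x` is between
`−∑ c(x,y)` over edges entering `F` and `∑ c(x,y)` over edges leaving `F`. -/
theorem finite_flow_existence {X : Type*} [Fintype X] [DecidableEq X]
    (G : SimpleGraph X) [DecidableRel G.Adj]
    (f : X → ℝ) (c : X → X → ℝ) (hc : ∀ x y, G.Adj x y → 0 ≤ c x y) :
    (∃ φ : X → X → ℝ, IsFlow G f φ ∧ ∀ x y, G.Adj x y → φ x y ≤ c x y) ↔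
    (∀ F : Finset X,
      -(∑ p ∈ (Finset.univ ×ˢ Finset.univ).filter
          (fun p : X × X => G.Adj p.1 p.2 ∧ p.1 ∉ F ∧ p.2 ∈ F), c p.1 p.2)
        ≤ ∑ x ∈ F, f x ∧
      ∑ x ∈ F, f x ≤
        ∑ p ∈ (Finset.univ ×ˢ Finset.univ).filter
          (fun p : X × X => G.Adj p.1 p.2 ∧ p.1 ∈ F ∧ p.2 ∉ F), c p.1 p.2) :=
  finite_flow_existence_aux G f c hc
end

section
/- Suppose G is a locally finite graph on vertex set X, f : X → ℝ, and c is a capacity function for G with c(x,y) < ∞ for every edge (x,y). Then G has an f-flow bounded by c if and only if for every finite set F ⊆ X: −∑_{(x,y) edge of G, x ∉ F, y ∈ F} c(x,y) ≤ ∑_{x ∈ F} f(x) ≤ ∑_{(x,y) edge of G, x ∈ F, y ∉ F} c(x,y). -/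
set_option linter.unusedSectionVars false
set_option linter.unusedVariables false
open Finset
open scoped Classical

section Aux

variable {X : Type*} [DecidableEq X] (G : SimpleGraph X) [G.LocallyFinite]

private lemma sum_swap_symm (Q : Finset (X × X)) (hQ : ∀ p ∈ Q, p.swap ∈ Q) (g : X × X → ℝ) :
    ∑ p ∈ Q, g p = ∑ p ∈ Q, g p.swap := by
  refine Finset.sum_equiv (Equiv.prodComm X X) (fun p => ?_) (fun p _ => ?_)
  · constructor
    · exact fun h => hQ p h
    · intro h
      have := hQ _ h
      simpa using this
  · simp [Equiv.prodComm]

private noncomputable def Tset (S : Finset X) : Finset X :=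
  S ∪ S.biUnion (fun x => G.neighborFinset x)

private noncomputable def Qset (S : Finset X) : Finset (X × X) :=
  ((Tset G S) ×ˢ (Tset G S)).filter (fun p => G.Adj p.1 p.2)

private lemma Qset_swap {S : Finset X} : ∀ p ∈ Qset G S, p.swap ∈ Qset G S := by
  rintro ⟨x, y⟩ hp
  simp only [Qset, mem_filter, mem_product] at hp ⊢
  exact ⟨⟨hp.1.2, hp.1.1⟩, hp.2.symm⟩

private lemma nbr_subset_T {S : Finset X} {x : X} (hx : x ∈ S) :
    G.neighborFinset x ⊆ Tset G S := fun y hy =>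
  Finset.mem_union_right _ (Finset.mem_biUnion.2 ⟨x, hx, hy⟩)

private lemma S_subset_T {S : Finset X} : S ⊆ Tset G S := Finset.subset_union_left

/-- expansion of the pairing sum over the pair set -/
private lemma pairing_expand (S : Finset X) (π : X → ℝ) (hπ : ∀ x ∉ S, π x = 0)
    (φ : X → X → ℝ) :
    ∑ x ∈ S, π x * ∑ y ∈ G.neighborFinset x, φ x y
      = ∑ p ∈ Qset G S, π p.1 * φ p.1 p.2 := by
  rw [Qset, Finset.sum_filter, Finset.sum_product]
  rw [← Finset.sum_subset (S_subset_T G (S := S))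
      (fun x _ hx => Finset.sum_eq_zero fun y _ => by rw [hπ x hx]; split <;> ring)]
  refine Finset.sum_congr rfl fun x hx => ?_
  rw [Finset.mul_sum, ← Finset.sum_filter]
  refine Finset.sum_congr ?_ fun y _ => rfl
  ext y
  simp only [Finset.mem_filter, SimpleGraph.mem_neighborFinset]
  exact ⟨fun h => ⟨nbr_subset_T G hx ((SimpleGraph.mem_neighborFinset _ _ _).2 h), h⟩, fun h => h.2⟩


variable (c : X → X → ℝ)

private noncomputable def Mval (S : Finset X) (π : X → ℝ) : ℝ :=
  ∑ p ∈ Qset G S, max (π p.1 - π p.2) 0 * c p.1 p.2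

/-- double pairing identity using antisymmetry -/
private lemma pairing_double (S : Finset X) (π : X → ℝ) (hπ : ∀ x ∉ S, π x = 0)
    (φ : X → X → ℝ) (hanti : ∀ x y, G.Adj x y → φ x y = -(φ y x)) :
    2 * (∑ x ∈ S, π x * ∑ y ∈ G.neighborFinset x, φ x y)
      = ∑ p ∈ Qset G S, (π p.1 - π p.2) * φ p.1 p.2 := by
  have e1 := pairing_expand G S π hπ φ
  have e2 : ∑ p ∈ Qset G S, π p.1 * φ p.1 p.2
      = - ∑ p ∈ Qset G S, π p.2 * φ p.1 p.2 := by
    rw [sum_swap_symm (Qset G S) (Qset_swap G) (fun p => π p.1 * φ p.1 p.2)]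
    rw [← Finset.sum_neg_distrib]
    refine Finset.sum_congr rfl fun p hp => ?_
    have hadj : G.Adj p.1 p.2 := (Finset.mem_filter.1 hp).2
    have := hanti p.2 p.1 hadj.symm
    simp only [Prod.fst_swap, Prod.snd_swap, this]
    ring
  have e3 : ∑ p ∈ Qset G S, (π p.1 - π p.2) * φ p.1 p.2
      = ∑ p ∈ Qset G S, π p.1 * φ p.1 p.2 - ∑ p ∈ Qset G S, π p.2 * φ p.1 p.2 := by
    rw [← Finset.sum_sub_distrib]
    exact Finset.sum_congr rfl fun p _ => by ring
  rw [e1, e3]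
  linarith [e2]

private lemma Msplit (S : Finset X) (π : X → ℝ) :
    ∑ p ∈ Qset G S,
        (max (π p.1 - π p.2) 0 * c p.1 p.2 + max (π p.2 - π p.1) 0 * c p.2 p.1)
      = 2 * Mval G c S π := by
  rw [Finset.sum_add_distrib]
  have : ∑ p ∈ Qset G S, max (π p.2 - π p.1) 0 * c p.2 p.1 = Mval G c S π := by
    rw [Mval, sum_swap_symm (Qset G S) (Qset_swap G)
      (fun p => max (π p.1 - π p.2) 0 * c p.1 p.2)]
    simp
  rw [this, Mval]; ring

private lemma pairing_le (S : Finset X) (π : X → ℝ) (hπ : ∀ x ∉ S, π x = 0)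
    (φ : X → X → ℝ) (hanti : ∀ x y, G.Adj x y → φ x y = -(φ y x))
    (hcb : ∀ x y, G.Adj x y → φ x y ≤ c x y) :
    ∑ x ∈ S, π x * ∑ y ∈ G.neighborFinset x, φ x y ≤ Mval G c S π := by
  have h1 := pairing_double G S π hπ φ hanti
  have h2 : ∑ p ∈ Qset G S, (π p.1 - π p.2) * φ p.1 p.2 ≤ 2 * Mval G c S π := by
    rw [← Msplit G c S π]
    refine Finset.sum_le_sum fun p hp => ?_
    have hadj : G.Adj p.1 p.2 := (Finset.mem_filter.1 hp).2
    have hc1 := hcb p.1 p.2 hadj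
    have hc2 := hcb p.2 p.1 hadj.symm
    have ha := hanti p.1 p.2 hadj
    rcases le_total (π p.2) (π p.1) with h | h
    · rw [max_eq_left (by linarith), max_eq_right (by linarith)]
      nlinarith
    · rw [max_eq_right (by linarith), max_eq_left (by linarith)]
      nlinarith
  linarith

private noncomputable def phistar (π : X → ℝ) : X → X → ℝ := fun x y =>
  if G.Adj x y then (if π y < π x then c x y else if π x < π y then -(c y x) else 0) else 0

private lemma phistar_anti (π : X → ℝ) :
    ∀ x y, G.Adj x y → phistar G c π x y = -(phistar G c π y x) := by
  intro x y hadj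
  simp only [phistar, hadj, hadj.symm, if_true]
  rcases lt_trichotomy (π x) (π y) with h | h | h
  · simp [h, asymm h]
  · simp [h]
  · simp [h, asymm h]

private lemma phistar_nonadj (π : X → ℝ) {x y : X} (h : ¬ G.Adj x y) :
    phistar G c π x y = 0 := by simp [phistar, h]

private lemma phistar_mem (hc : ∀ x y, G.Adj x y → 0 ≤ c x y) (π : X → ℝ) {x y : X}
    (hadj : G.Adj x y) : -(c y x) ≤ phistar G c π x y ∧ phistar G c π x y ≤ c x y := by
  have h1 := hc x y hadj
  have h2 := hc y x hadj.symm
  simp only [phistar, hadj, if_true]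
  split_ifs <;> constructor <;> linarith

private lemma phistar_key (π : X → ℝ) {x y : X} (hadj : G.Adj x y) :
    (π x - π y) * phistar G c π x y
      = max (π x - π y) 0 * c x y + max (π y - π x) 0 * c y x := by
  simp only [phistar, hadj, if_true]
  rcases lt_trichotomy (π x) (π y) with h | h | h
  · rw [if_neg (asymm h), if_pos h, max_eq_right (by linarith), max_eq_left (by linarith)]
    ring
  · simp [h]
  · rw [if_pos h, max_eq_left (by linarith), max_eq_right (by linarith)]
    ring

private lemma pairing_star (S : Finset X) (π : X → ℝ) (hπ : ∀ x ∉ S, π x = 0) :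
    ∑ x ∈ S, π x * ∑ y ∈ G.neighborFinset x, phistar G c π x y = Mval G c S π := by
  have h1 := pairing_double G S π hπ (phistar G c π) (phistar_anti G c π)
  have h2 : ∑ p ∈ Qset G S, (π p.1 - π p.2) * phistar G c π p.1 p.2
      = 2 * Mval G c S π := by
    rw [← Msplit G c S π]
    refine Finset.sum_congr rfl fun p hp => ?_
    exact phistar_key G c π (Finset.mem_filter.1 hp).2
  linarith

private lemma cut_sum (S A : Finset X) (hAS : A ⊆ S) (g : X → X → ℝ) :
    ∑ p ∈ Qset G S, (if p.1 ∈ A ∧ p.2 ∉ A then g p.1 p.2 else 0)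
      = ∑ x ∈ A, ∑ y ∈ (G.neighborFinset x).filter (fun y => y ∉ A), g x y := by
  rw [Qset, Finset.sum_filter, Finset.sum_product]
  rw [← Finset.sum_subset (hAS.trans (S_subset_T G))
      (fun x _ hx => Finset.sum_eq_zero fun y _ => by
        simp [hx])]
  refine Finset.sum_congr rfl fun x hx => ?_
  have hxS : x ∈ S := hAS hx
  have : ∀ y ∈ Tset G S,
      (if G.Adj x y then (if x ∈ A ∧ y ∉ A then g x y else 0) else 0)
        = (if G.Adj x y ∧ y ∉ A then g x y else 0) := by
    intro y _
    by_cases h1 : G.Adj x y <;> by_cases h2 : y ∈ A <;> simp [h1, h2, hx]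
  rw [Finset.sum_congr rfl this, ← Finset.sum_filter]
  refine Finset.sum_congr ?_ fun y _ => rfl
  ext y
  simp only [Finset.mem_filter, SimpleGraph.mem_neighborFinset]
  constructor
  · rintro ⟨_, h2, h3⟩; exact ⟨h2, h3⟩
  · rintro ⟨h2, h3⟩; exact ⟨nbr_subset_T G hxS ((SimpleGraph.mem_neighborFinset _ _ _).2 h2), h2, h3⟩

private lemma cut_sum' (S B : Finset X) (hBS : B ⊆ S) (g : X → X → ℝ) :
    ∑ p ∈ Qset G S, (if p.2 ∈ B ∧ p.1 ∉ B then g p.1 p.2 else 0)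
      = ∑ y ∈ B, ∑ x ∈ (G.neighborFinset y).filter (fun x => x ∉ B), g x y := by
  rw [sum_swap_symm (Qset G S) (Qset_swap G)
    (fun p => if p.2 ∈ B ∧ p.1 ∉ B then g p.1 p.2 else 0)]
  simp only [Prod.fst_swap, Prod.snd_swap]
  exact cut_sum G S B hBS (fun x y => g y x)

private lemma max_slice_pos {a b u v : ℝ} (hab : a < b) (hu : u ≤ b) (hv : v ≤ b)
    (hu' : u ≠ b → u ≤ a) (hv' : v ≠ b → v ≤ a) :
    max (u - v) 0 = max ((if u = b then a else u) - (if v = b then a else v)) 0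
      + (if u = b ∧ v ≠ b then b - a else 0) := by
  by_cases h1 : u = b <;> by_cases h2 : v = b
  · simp [h1, h2]
  · have := hv' h2
    rw [if_pos h1, if_neg h2, if_pos ⟨h1, h2⟩, h1,
      max_eq_left (by linarith), max_eq_left (by linarith)]
    ring
  · have := hu' h1
    rw [if_neg h1, if_pos h2, if_neg (by tauto), h2,
      max_eq_right (by linarith), max_eq_right (by linarith)]
    ring
  · simp [h1, h2]

private lemma max_slice_neg {a b u v : ℝ} (hab : b < a) (hu : b ≤ u) (hv : b ≤ v)
    (hu' : u ≠ b → a ≤ u) (hv' : v ≠ b → a ≤ v) :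
    max (u - v) 0 = max ((if u = b then a else u) - (if v = b then a else v)) 0
      + (if v = b ∧ u ≠ b then a - b else 0) := by
  by_cases h1 : u = b <;> by_cases h2 : v = b
  · simp [h1, h2]
  · have := hv' h2
    rw [if_pos h1, if_neg h2, if_neg (by tauto), h1,
      max_eq_right (by linarith), max_eq_right (by linarith)]
    ring
  · have := hu' h1
    rw [if_neg h1, if_pos h2, if_pos ⟨h2, h1⟩, h2,
      max_eq_left (by linarith), max_eq_left (by linarith)]
    ring
  · simp [h1, h2]

private lemma cutBound (f : X → ℝ)
    (Hcut : ∀ F : Finset X,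
      -(∑ y ∈ F, ∑ x ∈ (G.neighborFinset y).filter (fun x => x ∉ F), c x y) ≤ ∑ x ∈ F, f x ∧
      ∑ x ∈ F, f x ≤ ∑ x ∈ F, ∑ y ∈ (G.neighborFinset x).filter (fun y => y ∉ F), c x y)
    (S : Finset X) :
    ∀ (n : ℕ) (π : X → ℝ), ((S.image π).filter (fun v => v ≠ 0)).card ≤ n →
      (∀ x ∉ S, π x = 0) → ∑ x ∈ S, π x * f x ≤ Mval G c S π := by
  intro n
  induction n with
  | zero =>
    intro π hcard hπ
    have hz : ∀ x, π x = 0 := by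
      intro x
      by_cases hx : x ∈ S
      · by_contra h
        have hmem : π x ∈ (S.image π).filter (fun v => v ≠ 0) :=
          Finset.mem_filter.2 ⟨Finset.mem_image_of_mem π hx, h⟩
        rw [Finset.card_eq_zero.1 (Nat.le_zero.1 hcard)] at hmem
        exact absurd hmem (Finset.notMem_empty _)
      · exact hπ x hx
    have h1 : ∑ x ∈ S, π x * f x = 0 := Finset.sum_eq_zero fun x _ => by rw [hz x]; ring
    have h2 : Mval G c S π = 0 := Finset.sum_eq_zero fun p _ => by
      rw [hz p.1, hz p.2]; simp
    rw [h1, h2]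
  | succ n ih =>
    intro π hcard hπ
    set nv := (S.image π).filter (fun v => v ≠ 0) with hnv
    rcases Finset.eq_empty_or_nonempty nv with hne | hne
    · refine ih π ?_ hπ
      rw [← hnv, hne]; simp
    by_cases hbpos : 0 < nv.max' hne
    case pos =>
      set b := nv.max' hne with hbdef
      have hbS : b ∈ nv := nv.max'_mem hne
      have hb0 : 0 < b := hbpos
      have hble : ∀ x, π x ≤ b := by
        intro x
        by_cases hx : x ∈ S
        · by_cases hx0 : π x = 0
          · rw [hx0]; exact hb0.le
          · exact Finset.le_max' _ _ (Finset.mem_filter.2 ⟨Finset.mem_image_of_mem π hx, hx0⟩)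
        · rw [hπ x hx]; exact hb0.le
      set W := (insert (0:ℝ) (S.image π)).filter (fun v => v < b) with hW
      have hW0 : (0:ℝ) ∈ W := Finset.mem_filter.2 ⟨Finset.mem_insert_self _ _, hb0⟩
      have hWne : W.Nonempty := ⟨0, hW0⟩
      set a := W.max' hWne with hadef
      have ha_lt : a < b := (Finset.mem_filter.1 (W.max'_mem hWne)).2
      have ha0 : 0 ≤ a := Finset.le_max' _ _ hW0
      have hlea : ∀ x, π x ≠ b → π x ≤ a := by
        intro x hxb
        by_cases hx : x ∈ S
        · have hm : π x ∈ W := Finset.mem_filter.2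
            ⟨Finset.mem_insert_of_mem (Finset.mem_image_of_mem π hx),
              lt_of_le_of_ne (hble x) hxb⟩
          exact Finset.le_max' _ _ hm
        · rw [hπ x hx]; exact ha0
      set π' : X → ℝ := fun x => if π x = b then a else π x with hπ'def
      have hπ'x : ∀ x, π' x = if π x = b then a else π x := fun x => rfl
      have hπ' : ∀ x ∉ S, π' x = 0 := by
        intro x hx
        rw [hπ'x, hπ x hx, if_neg (fun h => hb0.ne h)]
      have hcard' : ((S.image π').filter (fun v => v ≠ 0)).card ≤ n := by
        have hsub : (S.image π').filter (fun v => v ≠ 0) ⊆ nv.erase b := by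
          intro v hv
          obtain ⟨hvim, hv0⟩ := Finset.mem_filter.1 hv
          obtain ⟨x, hx, hxv⟩ := Finset.mem_image.1 hvim
          by_cases hxb : π x = b
          · have hva : v = a := by rw [← hxv, hπ'x, if_pos hxb]
            subst hva
            refine Finset.mem_erase.2 ⟨ha_lt.ne, Finset.mem_filter.2 ⟨?_, hv0⟩⟩
            have hmem : a ∈ insert (0:ℝ) (S.image π) := (Finset.mem_filter.1 (W.max'_mem hWne)).1
            rcases Finset.mem_insert.1 hmem with h | h
            · exact absurd h hv0
            · exact h
          · have hva : v = π x := by rw [← hxv, hπ'x, if_neg hxb]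
            subst hva
            exact Finset.mem_erase.2 ⟨hxb, Finset.mem_filter.2 ⟨Finset.mem_image_of_mem π hx, hv0⟩⟩
        calc ((S.image π').filter (fun v => v ≠ 0)).card ≤ (nv.erase b).card :=
              Finset.card_le_card hsub
          _ = nv.card - 1 := Finset.card_erase_of_mem hbS
          _ ≤ n := by omega
      set A := S.filter (fun x => π x = b) with hA
      have hAS : A ⊆ S := Finset.filter_subset _ _
      have hmemA : ∀ z, z ∈ A ↔ π z = b := by
        intro z
        rw [hA, Finset.mem_filter]
        refine ⟨fun h => h.2, fun h => ⟨?_, h⟩⟩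
        by_contra hz
        rw [hπ z hz] at h
        exact hb0.ne h
      have hsplitL : ∑ x ∈ S, π x * f x
          = ∑ x ∈ S, π' x * f x + (b - a) * ∑ x ∈ A, f x := by
        have hterm : ∀ x ∈ S, π x * f x
            = π' x * f x + (if π x = b then (b - a) * f x else 0) := by
          intro x _
          by_cases hxb : π x = b
          · rw [hπ'x, if_pos hxb, if_pos hxb, hxb]; ring
          · rw [hπ'x, if_neg hxb, if_neg hxb]; ring
        rw [Finset.sum_congr rfl hterm, Finset.sum_add_distrib]
        congr 1
        rw [← Finset.sum_filter, Finset.mul_sum]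
      have hsplitM : Mval G c S π = Mval G c S π'
          + (b - a) * ∑ x ∈ A, ∑ y ∈ (G.neighborFinset x).filter (fun y => y ∉ A), c x y := by
        have hpt : ∀ p ∈ Qset G S, max (π p.1 - π p.2) 0 * c p.1 p.2
            = max (π' p.1 - π' p.2) 0 * c p.1 p.2
              + (if p.1 ∈ A ∧ p.2 ∉ A then (b - a) * c p.1 p.2 else 0) := by
          intro p _
          have key := max_slice_pos ha_lt (hble p.1) (hble p.2) (hlea p.1) (hlea p.2)
          have hcond : (p.1 ∈ A ∧ p.2 ∉ A) ↔ (π p.1 = b ∧ π p.2 ≠ b) := by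
            simp only [hmemA]
          rw [hπ'x, hπ'x, key]
          by_cases hcnd : π p.1 = b ∧ π p.2 ≠ b
          · rw [if_pos hcnd, if_pos (hcond.2 hcnd)]; ring
          · rw [if_neg hcnd, if_neg (fun h => hcnd (hcond.1 h))]; ring
        rw [Mval, Finset.sum_congr rfl hpt, Finset.sum_add_distrib]
        congr 1
        rw [cut_sum G S A hAS (fun x y => (b - a) * c x y), Finset.mul_sum]
        exact Finset.sum_congr rfl fun x _ => by rw [Finset.mul_sum]
      have hIH := ih π' hcard' hπ'
      have hcut := (Hcut A).2
      have hba : (0:ℝ) ≤ b - a := by linarith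
      have hmul := mul_le_mul_of_nonneg_left hcut hba
      rw [hsplitL, hsplitM]
      linarith
    case neg =>
      set b := nv.min' hne with hbdef
      have hbS : b ∈ nv := nv.min'_mem hne
      have hb0 : b < 0 := lt_of_le_of_ne
        (le_trans (Finset.min'_le _ _ (nv.max'_mem hne)) (not_lt.1 hbpos))
        (Finset.mem_filter.1 hbS).2
      have hble : ∀ x, b ≤ π x := by
        intro x
        by_cases hx : x ∈ S
        · by_cases hx0 : π x = 0
          · rw [hx0]; exact hb0.le
          · exact Finset.min'_le _ _ (Finset.mem_filter.2 ⟨Finset.mem_image_of_mem π hx, hx0⟩)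
        · rw [hπ x hx]; exact hb0.le
      set W := (insert (0:ℝ) (S.image π)).filter (fun v => b < v) with hW
      have hW0 : (0:ℝ) ∈ W := Finset.mem_filter.2 ⟨Finset.mem_insert_self _ _, hb0⟩
      have hWne : W.Nonempty := ⟨0, hW0⟩
      set a := W.min' hWne with hadef
      have ha_lt : b < a := (Finset.mem_filter.1 (W.min'_mem hWne)).2
      have ha0 : a ≤ 0 := Finset.min'_le _ _ hW0
      have hlea : ∀ x, π x ≠ b → a ≤ π x := by
        intro x hxb
        by_cases hx : x ∈ S
        · have hm : π x ∈ W := Finset.mem_filter.2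
            ⟨Finset.mem_insert_of_mem (Finset.mem_image_of_mem π hx),
              lt_of_le_of_ne (hble x) (Ne.symm hxb)⟩
          exact Finset.min'_le _ _ hm
        · rw [hπ x hx]; exact ha0
      set π' : X → ℝ := fun x => if π x = b then a else π x with hπ'def
      have hπ'x : ∀ x, π' x = if π x = b then a else π x := fun x => rfl
      have hπ' : ∀ x ∉ S, π' x = 0 := by
        intro x hx
        rw [hπ'x, hπ x hx, if_neg (fun h => hb0.ne h.symm)]
      have hcard' : ((S.image π').filter (fun v => v ≠ 0)).card ≤ n := by
        have hsub : (S.image π').filter (fun v => v ≠ 0) ⊆ nv.erase b := by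
          intro v hv
          obtain ⟨hvim, hv0⟩ := Finset.mem_filter.1 hv
          obtain ⟨x, hx, hxv⟩ := Finset.mem_image.1 hvim
          by_cases hxb : π x = b
          · have hva : v = a := by rw [← hxv, hπ'x, if_pos hxb]
            subst hva
            refine Finset.mem_erase.2 ⟨ha_lt.ne', Finset.mem_filter.2 ⟨?_, hv0⟩⟩
            have hmem : a ∈ insert (0:ℝ) (S.image π) := (Finset.mem_filter.1 (W.min'_mem hWne)).1
            rcases Finset.mem_insert.1 hmem with h | h
            · exact absurd h hv0
            · exact h
          · have hva : v = π x := by rw [← hxv, hπ'x, if_neg hxb]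
            subst hva
            exact Finset.mem_erase.2 ⟨hxb, Finset.mem_filter.2 ⟨Finset.mem_image_of_mem π hx, hv0⟩⟩
        calc ((S.image π').filter (fun v => v ≠ 0)).card ≤ (nv.erase b).card :=
              Finset.card_le_card hsub
          _ = nv.card - 1 := Finset.card_erase_of_mem hbS
          _ ≤ n := by omega
      set A := S.filter (fun x => π x = b) with hA
      have hAS : A ⊆ S := Finset.filter_subset _ _
      have hmemA : ∀ z, z ∈ A ↔ π z = b := by
        intro z
        rw [hA, Finset.mem_filter]
        refine ⟨fun h => h.2, fun h => ⟨?_, h⟩⟩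
        by_contra hz
        rw [hπ z hz] at h
        exact hb0.ne h.symm
      have hsplitL : ∑ x ∈ S, π x * f x
          = ∑ x ∈ S, π' x * f x + (b - a) * ∑ x ∈ A, f x := by
        have hterm : ∀ x ∈ S, π x * f x
            = π' x * f x + (if π x = b then (b - a) * f x else 0) := by
          intro x _
          by_cases hxb : π x = b
          · rw [hπ'x, if_pos hxb, if_pos hxb, hxb]; ring
          · rw [hπ'x, if_neg hxb, if_neg hxb]; ring
        rw [Finset.sum_congr rfl hterm, Finset.sum_add_distrib]
        congr 1
        rw [← Finset.sum_filter, Finset.mul_sum]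
      have hsplitM : Mval G c S π = Mval G c S π'
          + (a - b) * ∑ y ∈ A, ∑ x ∈ (G.neighborFinset y).filter (fun x => x ∉ A), c x y := by
        have hpt : ∀ p ∈ Qset G S, max (π p.1 - π p.2) 0 * c p.1 p.2
            = max (π' p.1 - π' p.2) 0 * c p.1 p.2
              + (if p.2 ∈ A ∧ p.1 ∉ A then (a - b) * c p.1 p.2 else 0) := by
          intro p _
          have key := max_slice_neg ha_lt (hble p.1) (hble p.2) (hlea p.1) (hlea p.2)
          have hcond : (p.2 ∈ A ∧ p.1 ∉ A) ↔ (π p.2 = b ∧ π p.1 ≠ b) := by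
            simp only [hmemA]
          rw [hπ'x, hπ'x, key]
          by_cases hcnd : π p.2 = b ∧ π p.1 ≠ b
          · rw [if_pos hcnd, if_pos (hcond.2 hcnd)]; ring
          · rw [if_neg hcnd, if_neg (fun h => hcnd (hcond.1 h))]; ring
        rw [Mval, Finset.sum_congr rfl hpt, Finset.sum_add_distrib]
        congr 1
        rw [cut_sum' G S A hAS (fun x y => (a - b) * c x y), Finset.mul_sum]
        exact Finset.sum_congr rfl fun x _ => by rw [Finset.mul_sum]
      have hIH := ih π' hcard' hπ'
      have hcut := (Hcut A).1
      set L := ∑ y ∈ A, ∑ x ∈ (G.neighborFinset y).filter (fun x => x ∉ A), c x y with hL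
      have hprod : 0 ≤ (a - b) * (L + ∑ x ∈ A, f x) :=
        mul_nonneg (by linarith) (by linarith)
      have hexp : (a - b) * (L + ∑ x ∈ A, f x)
          = (a - b) * L + (a - b) * ∑ x ∈ A, f x := by ring
      rw [hsplitL, hsplitM]
      linarith

private lemma inner_cancel (F : Finset X) (φ : X → X → ℝ)
    (hanti : ∀ x y, G.Adj x y → φ x y = -(φ y x)) :
    ∑ x ∈ F, ∑ y ∈ (G.neighborFinset x).filter (fun y => y ∈ F), φ x y = 0 := by
  set QF := (F ×ˢ F).filter (fun p => G.Adj p.1 p.2) with hQF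
  have hswap : ∀ p ∈ QF, p.swap ∈ QF := by
    rintro ⟨x, y⟩ hp
    simp only [hQF, Finset.mem_filter, Finset.mem_product] at hp ⊢
    exact ⟨⟨hp.1.2, hp.1.1⟩, hp.2.symm⟩
  have h1 : ∑ p ∈ QF, φ p.1 p.2
      = ∑ x ∈ F, ∑ y ∈ (G.neighborFinset x).filter (fun y => y ∈ F), φ x y := by
    calc ∑ p ∈ QF, φ p.1 p.2
        = ∑ p ∈ F ×ˢ F, if G.Adj p.1 p.2 then φ p.1 p.2 else 0 :=
          Finset.sum_filter _ _
      _ = ∑ x ∈ F, ∑ y ∈ F, if G.Adj x y then φ x y else 0 := Finset.sum_product _ _ _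
      _ = ∑ x ∈ F, ∑ y ∈ F.filter (fun y => G.Adj x y), φ x y :=
          Finset.sum_congr rfl fun x _ => (Finset.sum_filter _ _).symm
      _ = ∑ x ∈ F, ∑ y ∈ (G.neighborFinset x).filter (fun y => y ∈ F), φ x y := by
          refine Finset.sum_congr rfl fun x _ => Finset.sum_congr ?_ fun y _ => rfl
          ext y
          simp only [Finset.mem_filter, SimpleGraph.mem_neighborFinset]
          tauto
  have h2 : ∑ p ∈ QF, φ p.1 p.2 = - ∑ p ∈ QF, φ p.1 p.2 := by
    conv_lhs => rw [sum_swap_symm QF hswap (fun p => φ p.1 p.2)]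
    rw [← Finset.sum_neg_distrib]
    refine Finset.sum_congr rfl fun p hp => ?_
    have hadj : G.Adj p.1 p.2 := (Finset.mem_filter.1 hp).2
    simp only [Prod.fst_swap, Prod.snd_swap]
    rw [hanti p.2 p.1 hadj.symm]
  rw [← h1]
  linarith [h2]

end Aux

/-- **Existence of flows in locally finite graphs (folklore).** A locally finite graph `G`
has an `f`-flow bounded by a (finite-valued) capacity function `c` iff for every finite
set `F` of vertices, `∑_{x ∈ F} f x` is between `−∑ c(x,y)` over edges entering `F` and
`∑ c(x,y)` over edges leaving `F`. -/
theorem infinite_flow_existence {X : Type*} [DecidableEq X]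
    (G : SimpleGraph X) [G.LocallyFinite]
    (f : X → ℝ) (c : X → X → ℝ) (hc : ∀ x y, G.Adj x y → 0 ≤ c x y) :
    (∃ φ : X → X → ℝ, IsFlow G f φ ∧ ∀ x y, G.Adj x y → φ x y ≤ c x y) ↔
    (∀ F : Finset X,
      -(∑ y ∈ F, ∑ x ∈ (G.neighborFinset y).filter (fun x => x ∉ F), c x y)
        ≤ ∑ x ∈ F, f x ∧
      ∑ x ∈ F, f x ≤
        ∑ x ∈ F, ∑ y ∈ (G.neighborFinset x).filter (fun y => y ∉ F), c x y) := by
  constructor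
  · rintro ⟨φ, ⟨hanti, hcons⟩, hcb⟩ F
    have hsplit : ∀ x ∈ F, f x
        = ∑ y ∈ (G.neighborFinset x).filter (fun y => y ∈ F), φ x y
          + ∑ y ∈ (G.neighborFinset x).filter (fun y => y ∉ F), φ x y := by
      intro x _
      rw [← hcons x, Finset.sum_filter_add_sum_filter_not]
    have hkey : ∑ x ∈ F, f x
        = ∑ x ∈ F, ∑ y ∈ (G.neighborFinset x).filter (fun y => y ∉ F), φ x y := by
      rw [Finset.sum_congr rfl hsplit, Finset.sum_add_distrib,
        inner_cancel G F φ hanti, zero_add]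
    constructor
    · rw [hkey]
      have hlow : ∀ x ∈ F,
          - ∑ y ∈ (G.neighborFinset x).filter (fun y => y ∉ F), c y x
            ≤ ∑ y ∈ (G.neighborFinset x).filter (fun y => y ∉ F), φ x y := by
        intro x _
        rw [← Finset.sum_neg_distrib]
        refine Finset.sum_le_sum fun y hy => ?_
        have hadj : G.Adj x y := by
          have := (Finset.mem_filter.1 hy).1
          rwa [SimpleGraph.mem_neighborFinset] at this
        have h1 := hcb y x hadj.symm
        have h2 := hanti x y hadj
        linarith
      calc -(∑ y ∈ F, ∑ x ∈ (G.neighborFinset y).filter (fun x => x ∉ F), c x y)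
          = ∑ x ∈ F, -(∑ y ∈ (G.neighborFinset x).filter (fun y => y ∉ F), c y x) := by
            rw [← Finset.sum_neg_distrib]
        _ ≤ _ := Finset.sum_le_sum fun x hx => hlow x hx
    · rw [hkey]
      refine Finset.sum_le_sum fun x _ => Finset.sum_le_sum fun y hy => ?_
      have hadj : G.Adj x y := by
        have := (Finset.mem_filter.1 hy).1
        rwa [SimpleGraph.mem_neighborFinset] at this
      exact hcb x y hadj
  · intro Hcut
    set D : X → X → Set ℝ := fun x y =>
      if G.Adj x y then Set.Icc (-(c y x)) (c x y) else {0} with hD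
    set Φ : Set (X → X → ℝ) := {φ | ∀ x y, φ x y ∈ D x y} with hΦ
    set As : Set (X → X → ℝ) := {φ | ∀ x y, G.Adj x y → φ x y = -(φ y x)} with hAs
    have hΦc : IsCompact Φ := by
      have hrw : Φ = Set.pi Set.univ (fun x => Set.pi Set.univ (fun y => D x y)) := by
        ext φ; simp [hΦ, Set.mem_pi]
      rw [hrw]
      refine isCompact_univ_pi fun x => isCompact_univ_pi fun y => ?_
      by_cases h : G.Adj x y
      · simp only [hD, h, if_true]; exact isCompact_Icc
      · simp only [hD, h, if_false]; exact isCompact_singleton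
    have hAcl : IsClosed As := by
      have hrw : As = ⋂ (x : X), ⋂ (y : X),
          {φ : X → X → ℝ | G.Adj x y → φ x y = -(φ y x)} := by
        ext φ; simp [hAs, Set.mem_iInter]
      rw [hrw]
      refine isClosed_iInter fun x => isClosed_iInter fun y => ?_
      by_cases h : G.Adj x y
      · simp only [h, forall_true_left]
        have c1 : Continuous fun φ : X → X → ℝ => φ x y :=
          (continuous_apply y).comp (continuous_apply x)
        have c2 : Continuous fun φ : X → X → ℝ => φ y x :=
          (continuous_apply x).comp (continuous_apply y)
        exact isClosed_eq c1 c2.neg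
      · convert isClosed_univ
        ext φ; simp [h]
    have hΦconv : Convex ℝ Φ := by
      intro φ hφ ψ hψ s t hs ht hst
      simp only [hΦ, Set.mem_setOf_eq] at hφ hψ ⊢
      intro x y
      have h1 := hφ x y
      have h2 := hψ x y
      have hval : (s • φ + t • ψ) x y = s * φ x y + t * ψ x y := by
        simp [smul_eq_mul]
      rw [hval]
      by_cases h : G.Adj x y
      · simp only [hD, h, if_true] at h1 h2 ⊢
        exact (convex_Icc _ _) h1 h2 hs ht hst
      · simp only [hD, h, if_false, Set.mem_singleton_iff] at h1 h2 ⊢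
        rw [h1, h2]; ring
    have hAconv : Convex ℝ As := by
      intro φ hφ ψ hψ s t hs ht hst
      simp only [hAs, Set.mem_setOf_eq] at hφ hψ ⊢
      intro x y hadj
      have h1 := hφ x y hadj
      have h2 := hψ x y hadj
      simp only [Pi.add_apply, Pi.smul_apply, smul_eq_mul]
      rw [h1, h2]; ring
    have hCcl : ∀ x : X,
        IsClosed {φ : X → X → ℝ | ∑ y ∈ G.neighborFinset x, φ x y = f x} := by
      intro x
      refine isClosed_eq ?_ continuous_const
      exact continuous_finset_sum _ fun y _ => (continuous_apply y).comp (continuous_apply x)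
    have feas : ∀ F : Finset X, ∃ φ, φ ∈ Φ ∩ As ∧
        ∀ x ∈ F, ∑ y ∈ G.neighborFinset x, φ x y = f x := by
      intro F
      let Tlin : (X → X → ℝ) →ₗ[ℝ] ({ x // x ∈ F } → ℝ) :=
        { toFun := fun φ => fun x => ∑ y ∈ G.neighborFinset (x : X), φ (x : X) y
          map_add' := fun φ ψ => by
            funext x; simp [Finset.sum_add_distrib]
          map_smul' := fun r φ => by
            funext x; simp [Finset.mul_sum] }
      have hTlin : ∀ φ (x : { x // x ∈ F }),
          Tlin φ x = ∑ y ∈ G.neighborFinset (x : X), φ (x : X) y := fun _ _ => rfl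
      have hTc : Continuous Tlin := continuous_pi fun x =>
        continuous_finset_sum _ fun y _ => (continuous_apply y).comp (continuous_apply (x : X))
      have hcomp : IsCompact (Φ ∩ As) := hΦc.inter_right hAcl
      have hconv : Convex ℝ (Φ ∩ As) := hΦconv.inter hAconv
      set sImg : Set ({ x // x ∈ F } → ℝ) := Tlin '' (Φ ∩ As) with hsImg
      by_cases hf : (fun x : { x // x ∈ F } => f (x : X)) ∈ sImg
      · obtain ⟨φ, hφmem, hφT⟩ := hf
        exact ⟨φ, hφmem, fun x hx => congrFun hφT ⟨x, hx⟩⟩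
      · exfalso
        obtain ⟨g, u, hgs, hgf⟩ := geometric_hahn_banach_closed_point
          (hconv.linear_image Tlin) ((hcomp.image hTc).isClosed) hf
        set π : X → ℝ := fun x =>
          if hx : x ∈ F then g (Pi.single (⟨x, hx⟩ : {x // x ∈ F}) 1) else 0 with hπdef
        have hπ : ∀ x ∉ F, π x = 0 := fun x hx => by
          simp only [hπdef]; exact dif_neg hx
        have hgrep : ∀ v : { x // x ∈ F } → ℝ,
            g v = ∑ i : { x // x ∈ F }, v i * π (i : X) := by
          intro v
          have e1 : g v = ∑ i : { x // x ∈ F }, g (Pi.single i (v i)) := by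
            conv_lhs => rw [← Finset.univ_sum_single v]
            exact map_sum g _ _
          rw [e1]
          refine Finset.sum_congr rfl fun i _ => ?_
          have hsingle : Pi.single i (v i)
              = (v i) • (Pi.single i 1 : { x // x ∈ F } → ℝ) := by
            funext j
            by_cases hji : j = i
            · subst hji; simp
            · simp [Pi.single_apply, hji]
          have hpi : π (i : X) = g (Pi.single i (1:ℝ)) := by
            simp only [hπdef]
            rw [dif_pos i.2]
          rw [hsingle, map_smul, hpi]
          simp [smul_eq_mul]
        have hφstar_mem : phistar G c π ∈ Φ ∩ As := by
          constructor
          · intro x y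
            by_cases h : G.Adj x y
            · simp only [hD, h, if_true]
              exact Set.mem_Icc.2 (phistar_mem G c hc π h)
            · simp only [hD, h, if_false, Set.mem_singleton_iff]
              exact phistar_nonadj G c π h
          · exact fun x y h => phistar_anti G c π x y h
        have hstar_in : Tlin (phistar G c π) ∈ sImg := ⟨_, hφstar_mem, rfl⟩
        have h1 := hgs _ hstar_in
        have e2 : g (Tlin (phistar G c π)) = Mval G c F π := by
          rw [hgrep]
          have estep : ∑ i : { x // x ∈ F },
                Tlin (phistar G c π) i * π (i : X)
              = ∑ x ∈ F, π x * ∑ y ∈ G.neighborFinset x, phistar G c π x y := by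
            rw [Finset.univ_eq_attach]
            exact (Finset.sum_attach F
              (fun x => (∑ y ∈ G.neighborFinset x, phistar G c π x y) * π x)).trans
              (Finset.sum_congr rfl fun x _ => mul_comm _ _)
          rw [estep, pairing_star G c F π hπ]
        have e3 : g (fun x : {x // x ∈ F} => f (x : X)) = ∑ x ∈ F, π x * f x := by
          rw [hgrep, Finset.univ_eq_attach]
          exact (Finset.sum_attach F (fun x => f x * π x)).trans
            (Finset.sum_congr rfl fun x _ => mul_comm _ _)
        have hbound := cutBound G c f Hcut F
          (((F.image π)).filter (fun v => v ≠ 0)).card π le_rfl hπ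
        rw [e2] at h1
        rw [e3] at hgf
        linarith
    obtain ⟨φ, hφmem⟩ := (hΦc.inter_right hAcl).inter_iInter_nonempty
      (fun x => {φ : X → X → ℝ | ∑ y ∈ G.neighborFinset x, φ x y = f x})
      hCcl
      (fun u => by
        obtain ⟨φ, hφ1, hφ2⟩ := feas u
        exact ⟨φ, hφ1, Set.mem_iInter₂.2 fun x hx => hφ2 x hx⟩)
    obtain ⟨⟨hΦφ, hAφ⟩, hCons⟩ := hφmem
    refine ⟨φ, ⟨fun x y h => hAφ x y h, fun x => Set.mem_iInter.1 hCons x⟩, ?_⟩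
    intro x y h
    have hm := hΦφ x y
    simp only [hD, h, if_true] at hm
    exact hm.2
end

section
/- Fix d ≥ 1, a free action a : ℤ^d ↷ X, and f : X → ℝ. For every x ∈ X, every compatible sequence (h_0, h_1, …) ∈ lim← ℤ^d/(2^iℤ)^d, every n > 0, and every y in the orbit of x: f(y) − ∑_{γ ∈ ℤ^d, ‖γ‖_∞ = 1} ψ_{x,(h_0,…,h_n)}(y, γ·y) = 2^{−nd} ∑_{z ∈ [y]_{(x,h_n)}} f(z). -/
open Finset

/-- `Γ₁ = {γ ∈ ℤᵈ : ‖γ‖_∞ = 1}`, the generators of the graph `G_a`. -/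
def Gamma1 (d : ℕ) : Finset (Fin d → ℤ) :=
  (Fintype.piFinset fun _ : Fin d => ({-1, 0, 1} : Finset ℤ)).erase 0

/-- `R_N = {(n_1, …, n_d) ∈ ℤᵈ : 0 ≤ n_i < N}`. -/
noncomputable def boxZ (d N : ℕ) : Finset (Fin d → ℤ) :=
  Fintype.piFinset fun _ : Fin d => Finset.Ico (0 : ℤ) (N : ℤ)

/-- For a coset `h + (2ⁿℤ)ᵈ` of `ℤᵈ/(2ⁿℤ)ᵈ` (given by a representative `h`) and `g ∈ ℤᵈ`,
the unique `h' ∈ h + (2ⁿℤ)ᵈ` with `g ∈ h' + R_{2ⁿ}`; so `h' + R_{2ⁿ}` is the block of the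
partition `P_{x,h}` (in coordinates) containing `g`.  This depends only on `h mod 2ⁿ`. -/
def latticeBase (d n : ℕ) (h g : Fin d → ℤ) : Fin d → ℤ :=
  fun i => g i - (g i - h i) % ((2 : ℤ) ^ n)

/-- `∑_{z ∈ [y]_{(x,h)}} f(z)` where `y = a g x` and the block is at level `n` with coset
(representative) `h`. -/
noncomputable def blockSum {X : Type*} (d : ℕ) (a : (Fin d → ℤ) → X → X) (f : X → ℝ) (x : X)
    (n : ℕ) (h g : Fin d → ℤ) : ℝ :=
  ∑ r ∈ boxZ d (2 ^ n), f (a (latticeBase d n h g + r) x)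

/-- The set `U_{x,h}(y,γ)` in coordinates: for `y = a g x`, the element
`z = a (g − i•γ) x ∈ U_{x,h}(y,γ)` is recorded by the index `i ∈ [0, 2^{n−1})`;
the conditions say `z ∈ [y]_{(x,h)}`, `(2^{n−1}γ)·z ∈ [y]_{(x,h)}` and `y = (iγ)·z`. -/
noncomputable def Uidx (d n : ℕ) (h g γ : Fin d → ℤ) : Finset ℤ :=
  (Finset.Ico (0 : ℤ) ((2 : ℤ) ^ (n - 1))).filter fun i =>
    latticeBase d n h (g - i • γ) = latticeBase d n h g ∧
    latticeBase d n h ((g - i • γ) + ((2 : ℤ) ^ (n - 1)) • γ) = latticeBase d n h g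

/-- `φ_{x,h}(y, γ·y) = 2^{−nd} · n_{x,h}(y, γ·y) · ∑_{z ∈ Q_{x,h}(y,γ)} f(z)` in
coordinates (`y = a g x`); here `Q_{x,h}(y,γ)` is the (unique) level-`(n−1)` subblock
containing the elements of `U_{x,h}(y,γ)`, computed from its least index. -/
noncomputable def phiFlow {X : Type*} (d : ℕ) (a : (Fin d → ℤ) → X → X) (f : X → ℝ)
    (x : X) (n : ℕ) (h g γ : Fin d → ℤ) : ℝ :=
  if hs : (Uidx d n h g γ).Nonempty then
    ((Uidx d n h g γ).card : ℝ) / 2 ^ (n * d) *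
      blockSum d a f x (n - 1) h (g - ((Uidx d n h g γ).min' hs) • γ)
  else 0

/-- `ψ_{x,(h_0,…,h_n)}(y, γ·y) = ∑_{i=1}^{n} (φ_{x,h_i}(y, γ·y) − φ_{x,h_i}(γ·y, y))`
in coordinates (`y = a g x`, and `γ·y` has coordinate `g + γ`). -/
noncomputable def psiSeq {X : Type*} (d : ℕ) (a : (Fin d → ℤ) → X → X) (f : X → ℝ)
    (x : X) (h : ℕ → Fin d → ℤ) (n : ℕ) (g γ : Fin d → ℤ) : ℝ :=
  ∑ i ∈ Finset.Icc 1 n,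
    (phiFlow d a f x i (h i) g γ - phiFlow d a f x i (h i) (g + γ) (-γ))

namespace MLaux

lemma emod_eq_of_bounds {a b M : ℤ} (hdvd : M ∣ a - b) (h0 : 0 ≤ b) (h1 : b < M) :
    a % M = b := by
  obtain ⟨k, hk⟩ := hdvd
  have ha : a = b + M * k := by linarith
  rw [ha, Int.add_mul_emod_self_left, Int.emod_eq_of_lt h0 h1]

lemma emod_add_right (a b N : ℤ) : (a + b) % N = (a % N + b) % N := by
  conv_rhs => rw [Int.add_emod]
  rw [Int.add_emod a b, Int.emod_emod_of_dvd a dvd_rfl]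

lemma coord_base_iff {M : ℤ} (hM : 0 < M) (gj hj t : ℤ) :
    gj + t - (gj + t - hj) % M = gj - (gj - hj) % M ↔
      0 ≤ (gj - hj) % M + t ∧ (gj - hj) % M + t < M := by
  set c := (gj - hj) % M with hc
  have h2 : (gj + t - hj) % M = (c + t) % M := by
    rw [show gj + t - hj = (gj - hj) + t by ring, emod_add_right]
  rw [h2]
  constructor
  · intro hEq
    have h3 : (c + t) % M = c + t := by omega
    have h4 := Int.emod_nonneg (c + t) hM.ne'
    have h5 := Int.emod_lt_of_pos (c + t) hM
    omega
  · rintro ⟨h0, h1⟩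
    rw [Int.emod_eq_of_lt h0 h1]
    ring

lemma latticeBase_add_iff {d n : ℕ} (h g t : Fin d → ℤ) :
    latticeBase d n h (g + t) = latticeBase d n h g ↔
      ∀ j, 0 ≤ (g j - h j) % 2 ^ n + t j ∧ (g j - h j) % 2 ^ n + t j < 2 ^ n := by
  have hM : (0:ℤ) < 2 ^ n := by positivity
  unfold latticeBase
  rw [funext_iff]
  apply forall_congr'
  intro j
  simp only [Pi.add_apply]
  exact coord_base_iff hM (g j) (h j) (t j)

lemma mem_Uidx {d m : ℕ} {h g γ : Fin d → ℤ} {i : ℤ} :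
    i ∈ Uidx d (m+1) h g γ ↔
      0 ≤ i ∧ i < 2 ^ m ∧
        ∀ j, 0 ≤ (g j - h j) % (2 * 2 ^ m) + -(i * γ j) ∧
          (g j - h j) % (2 * 2 ^ m) + -(i * γ j) < 2 * 2 ^ m ∧
          0 ≤ (g j - h j) % (2 * 2 ^ m) + (2 ^ m - i) * γ j ∧
          (g j - h j) % (2 * 2 ^ m) + (2 ^ m - i) * γ j < 2 * 2 ^ m := by
  have h2 : ((2:ℤ) ^ (m+1)) = 2 * 2 ^ m := by ring
  unfold Uidx
  simp only [Finset.mem_filter, Finset.mem_Ico, Nat.add_sub_cancel]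
  have e2 : (g - i • γ) + (2:ℤ) ^ m • γ = g + fun j => ((2:ℤ) ^ m - i) * γ j := by
    funext j; simp [smul_eq_mul]; ring
  have e1 : g - i • γ = g + fun j => -(i * γ j) := by
    funext j; simp [sub_eq_add_neg, smul_eq_mul]
  rw [e2, e1, latticeBase_add_iff, latticeBase_add_iff]
  simp only [h2]
  constructor
  · rintro ⟨⟨hi0, hi1⟩, hc1, hc2⟩
    exact ⟨hi0, hi1, fun j => ⟨(hc1 j).1, (hc1 j).2, (hc2 j).1, (hc2 j).2⟩⟩
  · rintro ⟨hi0, hi1, hq⟩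
    exact ⟨⟨hi0, hi1⟩, fun j => ⟨(hq j).1, (hq j).2.1⟩, fun j => ⟨(hq j).2.2.1, (hq j).2.2.2⟩⟩


lemma coord_iff {M c e wj γj i : ℤ} (hM : 0 < M)
    (hc : 0 ≤ c ∧ c < 2*M) (he : (e = 0 ∧ c < M) ∨ (e = 1 ∧ M ≤ c))
    (hw : (c < M ∧ wj = c + 1) ∨ (M ≤ c ∧ wj = 2*M - c))
    (hγ : γj = -1 ∨ γj = 0 ∨ γj = 1) (hi : 0 ≤ i) (hi2 : i < M) :
    (0 ≤ c + -(i * γj) ∧ c + -(i * γj) < 2*M ∧ 0 ≤ c + (M - i) * γj ∧ c + (M - i) * γj < 2*M) ↔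
      (γj = 0 ∨ (γj = 1 - 2*e ∧ i < wj) ∨ (γj = 2*e - 1 ∧ M - (wj - 1) ≤ i)) := by
  rcases hγ with rfl | rfl | rfl <;>
    simp only [mul_neg_one, mul_one, mul_zero, neg_neg, neg_zero, add_zero, true_or,
      iff_true] <;>
    omega

lemma coord_nowrap {M c γj i : ℤ} (hM : 0 < M) (hc : 0 ≤ c ∧ c < 2*M)
    (hγ : γj = -1 ∨ γj = 0 ∨ γj = 1) (hi : 0 ≤ i) (hi2 : i < M)
    (hq : 0 ≤ c + -(i * γj) ∧ c + -(i * γj) < 2*M ∧ 0 ≤ c + (M - i) * γj ∧ c + (M - i) * γj < 2*M) :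
    0 ≤ c + γj ∧ c + γj < 2*M := by
  rcases hγ with rfl | rfl | rfl <;>
    simp only [mul_neg_one, mul_one, mul_zero, neg_neg, neg_zero, add_zero] at hq <;>
    omega

lemma coord_subbase {M c e γj i gj hj : ℤ} (hM : 0 < M)
    (hdvd : 2*M ∣ gj - hj - c) (hc : 0 ≤ c ∧ c < 2*M)
    (he : (e = 0 ∧ c < M) ∨ (e = 1 ∧ M ≤ c))
    (hγ : γj = -1 ∨ γj = 0 ∨ γj = 1) (hi : 0 ≤ i) (hi2 : i < M)
    (hq : 0 ≤ c + -(i * γj) ∧ c + -(i * γj) < 2*M ∧ 0 ≤ c + (M - i) * γj ∧ c + (M - i) * γj < 2*M) :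
    gj - i * γj - (gj - i * γj - hj) % M
      = gj - c + M * (if γj = 1 then 0 else if γj = -1 then 1 else e) := by
  set em : ℤ := if γj = 1 then 0 else if γj = -1 then 1 else e with hem
  have hrange : 0 ≤ c - i*γj - M*em ∧ c - i*γj - M*em < M := by
    rcases hγ with rfl | rfl | rfl <;> rcases he with ⟨rfl, he2⟩ | ⟨rfl, he2⟩ <;>
      simp only [hem, mul_neg_one, mul_one, mul_zero, neg_neg, neg_zero, add_zero] at hq ⊢ <;>
      (try norm_num) <;> omega
  obtain ⟨k, hk⟩ := hdvd
  have h1 : (gj - i * γj - hj) % M = c - i*γj - M*em :=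
    emod_eq_of_bounds ⟨2*k + em, by linear_combination hk⟩ hrange.1 hrange.2
  rw [h1]; ring

lemma coord_base0 {M c e gj hj : ℤ} (hM : 0 < M)
    (hdvd : 2*M ∣ gj - hj - c) (hc : 0 ≤ c ∧ c < 2*M)
    (he : (e = 0 ∧ c < M) ∨ (e = 1 ∧ M ≤ c)) :
    gj - (gj - hj) % M = gj - c + M * e := by
  have hrange : 0 ≤ c - M*e ∧ c - M*e < M := by
    rcases he with ⟨rfl, h2⟩ | ⟨rfl, h2⟩ <;> simp <;> omega
  obtain ⟨k, hk⟩ := hdvd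
  have h1 : (gj - hj) % M = c - M*e :=
    emod_eq_of_bounds ⟨2*k + e, by linear_combination hk⟩ hrange.1 hrange.2
  rw [h1]; ring

lemma coord_reflect {M c c' γj k : ℤ} (hM : 0 < M) (hc : 0 ≤ c ∧ c < 2*M)
    (hc' : c' = (c + γj) % (2*M))
    (hγ : γj = -1 ∨ γj = 0 ∨ γj = 1) (hk : 0 ≤ k) (hk2 : k < M) :
    (0 ≤ c' + -(k * -γj) ∧ c' + -(k * -γj) < 2*M ∧
      0 ≤ c' + (M - k) * -γj ∧ c' + (M - k) * -γj < 2*M)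
      ↔ (0 ≤ c + -((M-1-k) * γj) ∧ c + -((M-1-k) * γj) < 2*M ∧
          0 ≤ c + (M - (M-1-k)) * γj ∧ c + (M - (M-1-k)) * γj < 2*M) := by
  have hneg1 : (-1 : ℤ) % (2*M) = 2*M - 1 := by
    have h := Int.add_mul_emod_self_left (a := (-1:ℤ)) (b := 2*M) (c := 1)
    rw [show (-1 + 2*M*1 : ℤ) = 2*M - 1 by ring] at h
    rw [← h, Int.emod_eq_of_lt (by omega) (by omega)]
  have hself : (2*M) % (2*M) = 0 := Int.emod_self
  have hcc : (0 ≤ c + γj ∧ c + γj < 2*M ∧ c' = c + γj) ∨ (c + γj = 2*M ∧ c' = 0) ∨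
      (c + γj = -1 ∧ c' = 2*M - 1) := by
    by_cases hin : 0 ≤ c + γj ∧ c + γj < 2*M
    · exact Or.inl ⟨hin.1, hin.2, by rw [hc', Int.emod_eq_of_lt hin.1 hin.2]⟩
    · rcases hγ with rfl | rfl | rfl
      · right; right
        have hcz : c = 0 := by omega
        subst hcz
        exact ⟨by ring, by rw [hc']; norm_num [hneg1]⟩
      · omega
      · right; left
        have hcz : c = 2*M - 1 := by omega
        subst hcz
        exact ⟨by ring, by rw [hc', show (2*M-1+1 : ℤ) = 2*M by ring, hself]⟩
  rcases hγ with rfl | rfl | rfl <;>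
    simp only [neg_neg, neg_zero, mul_neg_one, mul_one, mul_zero, neg_zero, add_zero,
      mul_neg, neg_neg] <;>
    omega

def cF (d m : ℕ) (h g : Fin d → ℤ) (j : Fin d) : ℤ := (g j - h j) % (2 * 2 ^ m)

def eF (d m : ℕ) (h g : Fin d → ℤ) (j : Fin d) : ℤ :=
  if 2 ^ m ≤ cF d m h g j then 1 else 0

def wF (d m : ℕ) (h g : Fin d → ℤ) (j : Fin d) : ℤ :=
  if 2 ^ m ≤ cF d m h g j then 2 * 2 ^ m - cF d m h g j else cF d m h g j + 1

def emF (d m : ℕ) (h g γ : Fin d → ℤ) (j : Fin d) : ℤ :=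
  if γ j = 1 then 0 else if γ j = -1 then 1 else eF d m h g j

def epF (d m : ℕ) (h g γ : Fin d → ℤ) (j : Fin d) : ℤ :=
  if γ j = 1 then 1 else if γ j = -1 then 0 else eF d m h g j

lemma c_facts (d m : ℕ) (h g : Fin d → ℤ) (j : Fin d) :
    0 ≤ cF d m h g j ∧ cF d m h g j < 2 * 2 ^ m ∧
      ((eF d m h g j = 0 ∧ cF d m h g j < 2 ^ m) ∨ (eF d m h g j = 1 ∧ 2 ^ m ≤ cF d m h g j)) ∧
      ((cF d m h g j < 2 ^ m ∧ wF d m h g j = cF d m h g j + 1) ∨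
        (2 ^ m ≤ cF d m h g j ∧ wF d m h g j = 2 * 2 ^ m - cF d m h g j)) := by
  have hpos : (0:ℤ) < 2 * 2 ^ m := by positivity
  have h0 := Int.emod_nonneg (g j - h j) hpos.ne'
  have h1 := Int.emod_lt_of_pos (g j - h j) hpos
  simp only [eF, wF, cF]
  split_ifs with hh <;> refine ⟨h0, h1, ?_, ?_⟩ <;> omega

lemma c_dvd (d m : ℕ) (h g : Fin d → ℤ) (j : Fin d) :
    2 * 2 ^ m ∣ g j - h j - cF d m h g j :=
  ⟨(g j - h j) / (2 * 2 ^ m), by rw [cF, Int.emod_def]; ring⟩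

lemma min'_insert' (a : ℤ) (S : Finset ℤ) (hS : S.Nonempty) :
    (insert a S).min' (Finset.insert_nonempty a S) = min a (S.min' hS) := by
  apply le_antisymm
  · apply le_min
    · exact Finset.min'_le _ _ (Finset.mem_insert_self a S)
    · exact Finset.le_min' _ _ _ fun b hb =>
        Finset.min'_le _ _ (Finset.mem_insert_of_mem hb)
  · apply Finset.le_min'
    intro b hb
    rcases Finset.mem_insert.mp hb with rfl | hb
    · exact min_le_left _ _
    · exact le_trans (min_le_right _ _) (Finset.min'_le _ _ hb)

lemma min'_image_sub_one (S : Finset ℤ) (hS : S.Nonempty) :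
    ((S.image (fun v => v - 1)).min' (hS.image _)) = S.min' hS - 1 := by
  apply le_antisymm
  · exact Finset.min'_le _ _ (Finset.mem_image_of_mem _ (Finset.min'_mem S hS))
  · apply Finset.le_min'
    intro b hb
    obtain ⟨v, hv, rfl⟩ := Finset.mem_image.mp hb
    have := Finset.min'_le S v hv
    omega

lemma min'_congr {S T : Finset ℤ} (hS : S.Nonempty) (hT : T.Nonempty) (h : S = T) :
    S.min' hS = T.min' hT := by subst h; rfl

lemma insert_min_facts {d : ℕ} (M : ℤ) (hM : 0 < M) (S : Finset (Fin d)) (w : Fin d → ℤ)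
    (hw : ∀ j, 1 ≤ w j ∧ w j ≤ M) :
    (S = ∅ ∧ (insert M (S.image w)).min' (Finset.insert_nonempty _ _) = M ∧
        (insert M (S.image (fun j => w j - 1))).min' (Finset.insert_nonempty _ _) = M) ∨
      (S.Nonempty ∧
        (insert M (S.image (fun j => w j - 1))).min' (Finset.insert_nonempty _ _) =
          (insert M (S.image w)).min' (Finset.insert_nonempty _ _) - 1 ∧
        1 ≤ (insert M (S.image w)).min' (Finset.insert_nonempty _ _) ∧
        (insert M (S.image w)).min' (Finset.insert_nonempty _ _) ≤ M) := by
  rcases S.eq_empty_or_nonempty with hSe | hSne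
  · left
    refine ⟨hSe, ?_, ?_⟩
    · rw [min'_congr _ (Finset.singleton_nonempty M) (by rw [hSe]; simp)]
      exact Finset.min'_singleton M
    · rw [min'_congr _ (Finset.singleton_nonempty M) (by rw [hSe]; simp)]
      exact Finset.min'_singleton M
  · right
    set W := (S.image w).min' (hSne.image w) with hW
    have hWmem := Finset.min'_mem _ (hSne.image w)
    obtain ⟨j0, hj0, hj0e⟩ := Finset.mem_image.mp hWmem
    have hWb : 1 ≤ W ∧ W ≤ M := by have := hw j0; omega
    have h1 : (insert M (S.image w)).min' (Finset.insert_nonempty _ _) = min M W :=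
      min'_insert' M _ (hSne.image w)
    have h2 : S.image (fun j => w j - 1) = (S.image w).image (fun v => v - 1) := by
      rw [Finset.image_image]
      rfl
    have h3 : (insert M (S.image (fun j => w j - 1))).min' (Finset.insert_nonempty _ _) =
        min M (W - 1) := by
      rw [min'_insert' M _ (hSne.image _)]
      congr 1
      rw [min'_congr _ ((hSne.image w).image _) h2]
      exact min'_image_sub_one (S.image w) (hSne.image w)
    refine ⟨hSne, ?_, ?_, ?_⟩ <;> rw [h1] <;> try rw [h3]
    all_goals omega

lemma Uidx_repr (d m : ℕ) (h g γ : Fin d → ℤ) (hγ : ∀ j, γ j = -1 ∨ γ j = 0 ∨ γ j = 1) :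
    Uidx d (m+1) h g γ =
      Finset.Ico
        (2 ^ m - (insert ((2:ℤ) ^ m)
          ((Finset.univ.filter fun j => γ j ≠ 0 ∧ γ j = 2 * eF d m h g j - 1).image
            (fun j => wF d m h g j - 1))).min' (Finset.insert_nonempty _ _))
        ((insert ((2:ℤ) ^ m)
          ((Finset.univ.filter fun j => γ j ≠ 0 ∧ γ j = 1 - 2 * eF d m h g j).image
            (wF d m h g))).min' (Finset.insert_nonempty _ _)) := by
  have hM : (0:ℤ) < 2 ^ m := by positivity
  set Qs := insert ((2:ℤ)^m) ((Finset.univ.filter fun j => γ j ≠ 0 ∧ γ j = 2 * eF d m h g j - 1).image (fun j => wF d m h g j - 1)) with hQs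
  set Ps := insert ((2:ℤ)^m) ((Finset.univ.filter fun j => γ j ≠ 0 ∧ γ j = 1 - 2 * eF d m h g j).image (wF d m h g)) with hPs
  set Q := Qs.min' (Finset.insert_nonempty _ _) with hQ
  set P := Ps.min' (Finset.insert_nonempty _ _) with hP
  have hw : ∀ j, 1 ≤ wF d m h g j ∧ wF d m h g j ≤ 2 ^ m := by
    intro j; have := c_facts d m h g j; omega
  have hQle : Q ≤ 2 ^ m := Finset.min'_le _ _ (Finset.mem_insert_self _ _)
  have hPle : P ≤ 2 ^ m := Finset.min'_le _ _ (Finset.mem_insert_self _ _)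
  have hQ0 : 0 ≤ Q := by
    apply Finset.le_min'
    intro b hb
    simp only [hQs, Finset.mem_insert, Finset.mem_image, Finset.mem_filter,
      Finset.mem_univ, true_and] at hb
    rcases hb with rfl | ⟨j, _, rfl⟩
    · omega
    · have := hw j; omega
  have hP1 : 1 ≤ P := by
    apply Finset.le_min'
    intro b hb
    simp only [hPs, Finset.mem_insert, Finset.mem_image, Finset.mem_filter,
      Finset.mem_univ, true_and] at hb
    rcases hb with rfl | ⟨j, _, rfl⟩
    · omega
    · exact (hw j).1
  ext i
  rw [mem_Uidx, Finset.mem_Ico]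
  simp only [show ∀ j : Fin d, (g j - h j) % (2*2^m) = cF d m h g j from fun j => rfl]
  constructor
  · rintro ⟨h0, h1, hq⟩
    constructor
    · have hle : 2 ^ m - i ≤ Q := by
        apply Finset.le_min'
        intro b hb
        simp only [hQs, Finset.mem_insert, Finset.mem_image, Finset.mem_filter,
          Finset.mem_univ, true_and] at hb
        rcases hb with rfl | ⟨j, ⟨hj0, hjB⟩, rfl⟩
        · omega
        · have hcf := c_facts d m h g j
          have hdis := (coord_iff hM ⟨hcf.1, hcf.2.1⟩ hcf.2.2.1 hcf.2.2.2 (hγ j) h0 h1).mp (hq j)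
          rcases hcf.2.2.1 with ⟨he, _⟩ | ⟨he, _⟩ <;> omega
      omega
    · rw [hP, Finset.lt_min'_iff]
      intro b hb
      simp only [hPs, Finset.mem_insert, Finset.mem_image, Finset.mem_filter,
        Finset.mem_univ, true_and] at hb
      rcases hb with rfl | ⟨j, ⟨hj0, hjA⟩, rfl⟩
      · omega
      · have hcf := c_facts d m h g j
        have hdis := (coord_iff hM ⟨hcf.1, hcf.2.1⟩ hcf.2.2.1 hcf.2.2.2 (hγ j) h0 h1).mp (hq j)
        rcases hcf.2.2.1 with ⟨he, _⟩ | ⟨he, _⟩ <;> omega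
  · rintro ⟨h0, h1⟩
    have hi0 : 0 ≤ i := by omega
    have hi1 : i < 2 ^ m := by omega
    refine ⟨hi0, hi1, fun j => ?_⟩
    have hcf := c_facts d m h g j
    rw [coord_iff hM ⟨hcf.1, hcf.2.1⟩ hcf.2.2.1 hcf.2.2.2 (hγ j) hi0 hi1]
    have memB : γ j ≠ 0 → γ j = 2 * eF d m h g j - 1 → 2 ^ m - (wF d m h g j - 1) ≤ i := by
      intro hj0 hjB
      have hmem : wF d m h g j - 1 ∈ Qs := by
        rw [hQs]; apply Finset.mem_insert_of_mem; apply Finset.mem_image_of_mem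
        simp only [Finset.mem_filter, Finset.mem_univ, true_and]
        exact ⟨hj0, hjB⟩
      have := Finset.min'_le _ _ hmem
      omega
    have memA : γ j ≠ 0 → γ j = 1 - 2 * eF d m h g j → i < wF d m h g j := by
      intro hj0 hjA
      have hmem : wF d m h g j ∈ Ps := by
        rw [hPs]; apply Finset.mem_insert_of_mem; apply Finset.mem_image_of_mem
        simp only [Finset.mem_filter, Finset.mem_univ, true_and]
        exact ⟨hj0, hjA⟩
      have := Finset.min'_le _ _ hmem
      omega
    rcases hγ j with hj | hj | hj
    · rcases hcf.2.2.1 with ⟨he, hce⟩ | ⟨he, hce⟩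
      · right; right
        refine ⟨by omega, memB (by omega) (by omega)⟩
      · right; left
        refine ⟨by omega, memA (by omega) (by omega)⟩
    · left; exact hj
    · rcases hcf.2.2.1 with ⟨he, hce⟩ | ⟨he, hce⟩
      · right; left
        refine ⟨by omega, memA (by omega) (by omega)⟩
      · right; right
        refine ⟨by omega, memB (by omega) (by omega)⟩

lemma card_sub (d m : ℕ) (h g γ : Fin d → ℤ) (hγ : ∀ j, γ j = -1 ∨ γ j = 0 ∨ γ j = 1)
    (hne : γ ≠ 0) :
    ((Uidx d (m+1) h g γ).card : ℤ) - ((Uidx d (m+1) h g (-γ)).card : ℤ) =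
      (if ∀ j, γ j = 0 ∨ γ j = 1 - 2 * eF d m h g j then 1 else 0) -
      (if ∀ j, γ j = 0 ∨ γ j = 2 * eF d m h g j - 1 then 1 else 0) := by
  have hM : (0:ℤ) < 2 ^ m := by positivity
  have hγ' : ∀ j, (-γ) j = -1 ∨ (-γ) j = 0 ∨ (-γ) j = 1 := by
    intro j; rcases hγ j with hj | hj | hj <;> simp [hj]
  have hw : ∀ j, 1 ≤ wF d m h g j ∧ wF d m h g j ≤ 2 ^ m := by
    intro j; have := c_facts d m h g j; omega
  have hef : ∀ j, eF d m h g j = 0 ∨ eF d m h g j = 1 := by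
    intro j; have := c_facts d m h g j; omega
  set A := Finset.univ.filter fun j => γ j ≠ 0 ∧ γ j = 1 - 2 * eF d m h g j with hA
  set B := Finset.univ.filter fun j => γ j ≠ 0 ∧ γ j = 2 * eF d m h g j - 1 with hB
  have hAneg : (Finset.univ.filter fun j => (-γ) j ≠ 0 ∧ (-γ) j = 1 - 2 * eF d m h g j) = B := by
    ext j
    simp only [Finset.mem_filter, Finset.mem_univ, true_and, Pi.neg_apply, hB]
    constructor
    · rintro ⟨hj0, hj⟩; exact ⟨by omega, by omega⟩
    · rintro ⟨hj0, hj⟩; exact ⟨by omega, by omega⟩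
  have hBneg : (Finset.univ.filter fun j => (-γ) j ≠ 0 ∧ (-γ) j = 2 * eF d m h g j - 1) = A := by
    ext j
    simp only [Finset.mem_filter, Finset.mem_univ, true_and, Pi.neg_apply, hA]
    constructor
    · rintro ⟨hj0, hj⟩; exact ⟨by omega, by omega⟩
    · rintro ⟨hj0, hj⟩; exact ⟨by omega, by omega⟩
  rw [Uidx_repr d m h g γ hγ, Uidx_repr d m h g (-γ) hγ']
  rw [Int.card_Ico, Int.card_Ico]
  have hrw1 : (insert ((2:ℤ) ^ m)
      ((Finset.univ.filter fun j => (-γ) j ≠ 0 ∧ (-γ) j = 2 * eF d m h g j - 1).image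
        (fun j => wF d m h g j - 1))).min' (Finset.insert_nonempty _ _) =
      (insert ((2:ℤ) ^ m) (A.image (fun j => wF d m h g j - 1))).min'
        (Finset.insert_nonempty _ _) :=
    min'_congr _ _ (by rw [hBneg])
  have hrw2 : (insert ((2:ℤ) ^ m)
      ((Finset.univ.filter fun j => (-γ) j ≠ 0 ∧ (-γ) j = 1 - 2 * eF d m h g j).image
        (wF d m h g))).min' (Finset.insert_nonempty _ _) =
      (insert ((2:ℤ) ^ m) (B.image (wF d m h g))).min' (Finset.insert_nonempty _ _) :=
    min'_congr _ _ (by rw [hAneg])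
  rw [hrw1, hrw2]
  -- abbreviations for the four min values
  set PA := (insert ((2:ℤ) ^ m) (A.image (wF d m h g))).min' (Finset.insert_nonempty _ _) with hPA
  set QB := (insert ((2:ℤ) ^ m) (B.image (fun j => wF d m h g j - 1))).min'
    (Finset.insert_nonempty _ _) with hQB
  set PB := (insert ((2:ℤ) ^ m) (B.image (wF d m h g))).min' (Finset.insert_nonempty _ _) with hPB
  set QA := (insert ((2:ℤ) ^ m) (A.image (fun j => wF d m h g j - 1))).min'
    (Finset.insert_nonempty _ _) with hQA
  have hABne : A.Nonempty ∨ B.Nonempty := by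
    have hj : ∃ j, γ j ≠ 0 := by
      by_contra hcon
      push_neg at hcon
      exact hne (funext fun j => hcon j)
    obtain ⟨j, hj⟩ := hj
    rcases hγ j with hjv | hjv | hjv
    · rcases hef j with he | he
      · right; exact ⟨j, by simp only [hB, Finset.mem_filter, Finset.mem_univ, true_and]; omega⟩
      · left; exact ⟨j, by simp only [hA, Finset.mem_filter, Finset.mem_univ, true_and]; omega⟩
    · omega
    · rcases hef j with he | he
      · left; exact ⟨j, by simp only [hA, Finset.mem_filter, Finset.mem_univ, true_and]; omega⟩
      · right; exact ⟨j, by simp only [hB, Finset.mem_filter, Finset.mem_univ, true_and]; omega⟩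
  have hifB : (∀ j, γ j = 0 ∨ γ j = 1 - 2 * eF d m h g j) ↔ B = ∅ := by
    rw [Finset.filter_eq_empty_iff]
    constructor
    · intro hall j _
      rcases hall j with hj | hj
      · simp [hj]
      · rcases hef j with he | he <;> rcases hγ j with hv | hv | hv <;> simp <;> omega
    · intro hall j
      have := fun hu : j ∈ Finset.univ => hall hu
      simp only [Finset.mem_univ, forall_true_left, not_and] at this
      rcases hγ j with hv | hv | hv <;> rcases hef j with he | he <;> omega
  have hifA : (∀ j, γ j = 0 ∨ γ j = 2 * eF d m h g j - 1) ↔ A = ∅ := by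
    rw [Finset.filter_eq_empty_iff]
    constructor
    · intro hall j _
      rcases hall j with hj | hj
      · simp [hj]
      · rcases hef j with he | he <;> rcases hγ j with hv | hv | hv <;> simp <;> omega
    · intro hall j
      have := fun hu : j ∈ Finset.univ => hall hu
      simp only [Finset.mem_univ, forall_true_left, not_and] at this
      rcases hγ j with hv | hv | hv <;> rcases hef j with he | he <;> omega
  -- structural facts about the min values
  have hPAfact := insert_min_facts ((2:ℤ)^m) hM A (wF d m h g) hw
  have hPBfact := insert_min_facts ((2:ℤ)^m) hM B (wF d m h g) hw
  rw [← hPA, ← hQA] at hPAfact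
  rw [← hPB, ← hQB] at hPBfact
  simp only [hifB, hifA]
  rcases hPAfact with ⟨hAe, hPAv, hQAv⟩ | ⟨hAne, hQAv, hPA1, hPA2⟩ <;>
    rcases hPBfact with ⟨hBe, hPBv, hQBv⟩ | ⟨hBne, hQBv, hPB1, hPB2⟩
  · exact absurd hABne (by simp [hAe, hBe, Finset.not_nonempty_iff_eq_empty])
  · rw [if_neg (Finset.nonempty_iff_ne_empty.mp hBne), if_pos hAe]
    omega
  · rw [if_pos hBe, if_neg (Finset.nonempty_iff_ne_empty.mp hAne)]
    omega
  · rw [if_neg (Finset.nonempty_iff_ne_empty.mp hBne),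
      if_neg (Finset.nonempty_iff_ne_empty.mp hAne)]
    omega

lemma sub_smul_apply {d : ℕ} (g γ : Fin d → ℤ) (i : ℤ) (j : Fin d) :
    (g - i • γ) j = g j - i * γ j := by
  simp [smul_eq_mul]

lemma Uidx_base {d m : ℕ} {h g γ : Fin d → ℤ} (hγ : ∀ j, γ j = -1 ∨ γ j = 0 ∨ γ j = 1)
    {i : ℤ} (hi : i ∈ Uidx d (m+1) h g γ) :
    latticeBase d m h (g - i • γ) = fun j => g j - cF d m h g j + 2 ^ m * emF d m h g γ j := by
  have hM : (0:ℤ) < 2 ^ m := by positivity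
  rw [mem_Uidx] at hi
  obtain ⟨hi0, hi1, hq⟩ := hi
  funext j
  have hcf := c_facts d m h g j
  show (g - i • γ) j - ((g - i • γ) j - h j) % 2 ^ m = _
  rw [sub_smul_apply]
  exact coord_subbase hM (c_dvd d m h g j) ⟨hcf.1, hcf.2.1⟩ hcf.2.2.1 (hγ j) hi0 hi1 (hq j)

lemma Uidx_nowrap {d m : ℕ} {h g γ : Fin d → ℤ} (hγ : ∀ j, γ j = -1 ∨ γ j = 0 ∨ γ j = 1)
    (hne : (Uidx d (m+1) h g γ).Nonempty) (j : Fin d) :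
    0 ≤ cF d m h g j + γ j ∧ cF d m h g j + γ j < 2 * 2 ^ m := by
  have hM : (0:ℤ) < 2 ^ m := by positivity
  obtain ⟨i, hi⟩ := hne
  rw [mem_Uidx] at hi
  obtain ⟨hi0, hi1, hq⟩ := hi
  have hcf := c_facts d m h g j
  exact coord_nowrap hM ⟨hcf.1, hcf.2.1⟩ (hγ j) hi0 hi1 (hq j)

lemma Uidx_neg_image {d m : ℕ} (h g γ : Fin d → ℤ)
    (hγ : ∀ j, γ j = -1 ∨ γ j = 0 ∨ γ j = 1) :
    Uidx d (m+1) h (g + γ) (-γ) = (Uidx d (m+1) h g γ).image (fun i => 2 ^ m - 1 - i) := by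
  have hM : (0:ℤ) < 2 ^ m := by positivity
  have key : ∀ k : ℤ, k ∈ Uidx d (m+1) h (g + γ) (-γ) ↔
      2 ^ m - 1 - k ∈ Uidx d (m+1) h g γ := by
    intro k
    rw [mem_Uidx, mem_Uidx]
    constructor
    · rintro ⟨h0, h1, hq⟩
      refine ⟨by omega, by omega, fun j => ?_⟩
      have hcf := c_facts d m h g j
      have hc' : ((g + γ) j - h j) % (2 * 2 ^ m) = (cF d m h g j + γ j) % (2 * 2 ^ m) := by
        rw [Pi.add_apply, show g j + γ j - h j = (g j - h j) + γ j from by ring,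
          emod_add_right]
        rfl
      have hx := hq j
      rw [hc'] at hx
      simp only [Pi.neg_apply] at hx
      exact (coord_reflect hM ⟨hcf.1, hcf.2.1⟩ rfl (hγ j) h0 h1).mp hx
    · rintro ⟨h0, h1, hq⟩
      refine ⟨by omega, by omega, fun j => ?_⟩
      have hcf := c_facts d m h g j
      have hc' : ((g + γ) j - h j) % (2 * 2 ^ m) = (cF d m h g j + γ j) % (2 * 2 ^ m) := by
        rw [Pi.add_apply, show g j + γ j - h j = (g j - h j) + γ j from by ring,
          emod_add_right]
        rfl
      rw [hc']
      simp only [Pi.neg_apply]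
      have hk0 : 0 ≤ k := by omega
      have hk1 : k < 2 ^ m := by omega
      exact (coord_reflect hM ⟨hcf.1, hcf.2.1⟩ rfl (hγ j) hk0 hk1).mpr (hq j)
  ext k
  rw [key, Finset.mem_image]
  constructor
  · intro hk
    refine ⟨2 ^ m - 1 - k, hk, by ring⟩
  · rintro ⟨i, hi, rfl⟩
    have : 2 ^ m - 1 - (2 ^ m - 1 - i) = i := by ring
    rw [this]
    exact hi

noncomputable def TF {X : Type*} (d m : ℕ) (a : (Fin d → ℤ) → X → X) (f : X → ℝ) (x : X)
    (h g : Fin d → ℤ) (δ : Fin d → ℤ) : ℝ :=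
  ∑ s ∈ boxZ d (2 ^ m), f (a (fun j => g j - cF d m h g j + 2 ^ m * δ j + s j) x)

lemma phi_eval {X : Type*} (d m : ℕ) (a : (Fin d → ℤ) → X → X) (f : X → ℝ) (x : X)
    (h g γ : Fin d → ℤ) (hγ : ∀ j, γ j = -1 ∨ γ j = 0 ∨ γ j = 1) :
    phiFlow d a f x (m+1) h g γ =
      ((Uidx d (m+1) h g γ).card : ℝ) / 2 ^ ((m+1) * d) * TF d m a f x h g (emF d m h g γ) := by
  unfold phiFlow
  split_ifs with hs
  · congr 1
    have hmem := Finset.min'_mem _ hs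
    have hlb := Uidx_base hγ hmem
    unfold blockSum
    rw [Nat.add_sub_cancel]
    apply Finset.sum_congr rfl
    intro s _
    have hv : latticeBase d m h (g - (Uidx d (m+1) h g γ).min' hs • γ) + s =
        fun j => g j - cF d m h g j + 2 ^ m * emF d m h g γ j + s j := by
      rw [hlb]; funext j; simp
    rw [hv]
  · have : (Uidx d (m+1) h g γ).card = 0 := by
      rw [Finset.card_eq_zero, ← Finset.not_nonempty_iff_eq_empty]
      exact hs
    rw [this]
    norm_num

lemma phi_plus_eval {X : Type*} (d m : ℕ) (a : (Fin d → ℤ) → X → X) (f : X → ℝ) (x : X)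
    (h g γ : Fin d → ℤ) (hγ : ∀ j, γ j = -1 ∨ γ j = 0 ∨ γ j = 1) :
    phiFlow d a f x (m+1) h (g + γ) (-γ) =
      ((Uidx d (m+1) h g γ).card : ℝ) / 2 ^ ((m+1) * d) * TF d m a f x h g (epF d m h g γ) := by
  have hM : (0:ℤ) < 2 ^ m := by positivity
  have himg := Uidx_neg_image (m := m) h g γ hγ
  have hγ' : ∀ j, (-γ) j = -1 ∨ (-γ) j = 0 ∨ (-γ) j = 1 := by
    intro j; rcases hγ j with hj | hj | hj <;> simp [hj]
  have hcard : (Uidx d (m+1) h (g + γ) (-γ)).card = (Uidx d (m+1) h g γ).card := by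
    rw [himg]
    apply Finset.card_image_of_injOn
    intro u _ v _ huv
    simp only [] at huv
    omega
  unfold phiFlow
  split_ifs with hs
  · rw [hcard]
    congr 1
    -- the subcube for the reversed edge
    have hne : (Uidx d (m+1) h g γ).Nonempty := by
      rw [himg, Finset.image_nonempty] at hs
      exact hs
    have hnw := Uidx_nowrap hγ hne
    have hc' : ∀ j, cF d m h (g + γ) j = cF d m h g j + γ j := by
      intro j
      show ((g + γ) j - h j) % (2 * 2 ^ m) = _
      rw [Pi.add_apply, show g j + γ j - h j = (g j - h j) + γ j from by ring,
        emod_add_right]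
      exact Int.emod_eq_of_lt (hnw j).1 (hnw j).2
    have hmem := Finset.min'_mem _ hs
    have hlb := Uidx_base (g := g + γ) (γ := -γ) hγ' hmem
    unfold blockSum
    rw [Nat.add_sub_cancel]
    apply Finset.sum_congr rfl
    intro s _
    have hv : latticeBase d m h ((g + γ) - (Uidx d (m+1) h (g + γ) (-γ)).min' hs • (-γ)) + s =
        fun j => g j - cF d m h g j + 2 ^ m * epF d m h g γ j + s j := by
      rw [hlb]
      funext j
      have hee : emF d m h (g + γ) (-γ) j = epF d m h g γ j := by
        unfold emF epF
        simp only [Pi.neg_apply]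
        rcases hγ j with hj | hj | hj <;> simp only [hj] <;> norm_num
        · show eF d m h (g + γ) j = eF d m h g j
          unfold eF
          rw [hc' j, hj, add_zero]
      simp only [Pi.add_apply, hc', hee]
      ring
    rw [hv]
  · have : (Uidx d (m+1) h g γ).card = 0 := by
      rw [Finset.card_eq_zero, ← Finset.not_nonempty_iff_eq_empty, ← Finset.image_nonempty
        (f := fun i => 2 ^ m - 1 - i), ← himg]
      exact hs
    rw [this]
    norm_num

lemma mem_boxZ {d N : ℕ} {r : Fin d → ℤ} :
    r ∈ boxZ d N ↔ ∀ j, 0 ≤ r j ∧ r j < (N:ℤ) := by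
  simp [boxZ, Fintype.mem_piFinset, Finset.mem_Ico]

lemma box_split {d : ℕ} (N : ℕ) (hN : 0 < N) (F : (Fin d → ℤ) → ℝ) :
    ∑ r ∈ boxZ d (2 * N), F r =
      ∑ δ ∈ Fintype.piFinset (fun _ : Fin d => ({0, 1} : Finset ℤ)),
        ∑ s ∈ boxZ d N, F (fun j => (N : ℤ) * δ j + s j) := by
  have hNpos : (0:ℤ) < (N:ℤ) := by exact_mod_cast hN
  rw [← Finset.sum_product']
  symm
  apply Finset.sum_nbij'
    (i := fun p : ((Fin d → ℤ) × (Fin d → ℤ)) => (fun j => (N:ℤ) * p.1 j + p.2 j))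
    (j := fun r => ((fun j => r j / (N:ℤ)), (fun j => r j % (N:ℤ))))
  · rintro ⟨δ, t⟩ hp
    rw [Finset.mem_product] at hp
    simp only [Fintype.mem_piFinset, Finset.mem_insert, Finset.mem_singleton] at hp
    have ht := mem_boxZ.mp hp.2
    rw [mem_boxZ]
    intro j
    have h2 := ht j
    push_cast
    rcases hp.1 j with h1 | h1 <;> rw [h1] <;> (try simp) <;> omega
  · intro r hr
    have hr' := mem_boxZ.mp hr
    rw [Finset.mem_product]
    constructor
    · simp only [Fintype.mem_piFinset, Finset.mem_insert, Finset.mem_singleton]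
      intro j
      have h0 := (hr' j).1
      have h1 := (hr' j).2
      have hq0 : 0 ≤ r j / (N:ℤ) := Int.ediv_nonneg h0 hNpos.le
      have hq2 : r j / (N:ℤ) < 2 := by
        by_contra hcon
        push_neg at hcon
        have h2 : (N:ℤ) * 2 ≤ (N:ℤ) * (r j / (N:ℤ)) :=
          mul_le_mul_of_nonneg_left hcon hNpos.le
        have h3 := Int.mul_ediv_add_emod (r j) (N:ℤ)
        have h4 := Int.emod_nonneg (r j) hNpos.ne'
        push_cast at h1
        omega
      omega
    · rw [mem_boxZ]
      intro j
      exact ⟨Int.emod_nonneg _ hNpos.ne', Int.emod_lt_of_pos _ hNpos⟩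
  · rintro ⟨δ, t⟩ hp
    rw [Finset.mem_product] at hp
    simp only [Fintype.mem_piFinset, Finset.mem_insert, Finset.mem_singleton] at hp
    have ht := mem_boxZ.mp hp.2
    have hdiv : ∀ j, ((N:ℤ) * δ j + t j) / (N:ℤ) = δ j := by
      intro j
      rw [add_comm, Int.add_mul_ediv_left _ _ hNpos.ne',
        Int.ediv_eq_zero_of_lt (ht j).1 (ht j).2, zero_add]
    have hmod : ∀ j, ((N:ℤ) * δ j + t j) % (N:ℤ) = t j := by
      intro j
      rw [add_comm, Int.add_mul_emod_self_left, Int.emod_eq_of_lt (ht j).1 (ht j).2]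
    refine Prod.ext ?_ ?_ <;> funext j
    · exact hdiv j
    · exact hmod j
  · intro r hr
    funext j
    exact Int.mul_ediv_add_emod (r j) (N:ℤ)
  · rintro ⟨δ, t⟩ hp
    rfl

lemma mem_Gamma1_iff {d : ℕ} {γ : Fin d → ℤ} :
    γ ∈ Gamma1 d ↔ γ ≠ 0 ∧ ∀ j, γ j = -1 ∨ γ j = 0 ∨ γ j = 1 := by
  unfold Gamma1
  simp [Finset.mem_erase, Fintype.mem_piFinset]

lemma neg_mem_Gamma1 {d : ℕ} {γ : Fin d → ℤ} (hγ : γ ∈ Gamma1 d) : -γ ∈ Gamma1 d := by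
  rw [mem_Gamma1_iff] at hγ ⊢
  constructor
  · simpa using hγ.1
  · intro j
    have := hγ.2 j
    simp only [Pi.neg_apply]
    omega

lemma e_mem_pi {d m : ℕ} (h g : Fin d → ℤ) :
    eF d m h g ∈ Fintype.piFinset fun _ : Fin d => ({0, 1} : Finset ℤ) := by
  simp only [Fintype.mem_piFinset, Finset.mem_insert, Finset.mem_singleton]
  intro j
  unfold eF
  split_ifs <;> simp

lemma e_cases {d : ℕ} (m : ℕ) (h g : Fin d → ℤ) (j : Fin d) :
    eF d m h g j = 0 ∨ eF d m h g j = 1 := by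
  unfold eF; split_ifs <;> simp

lemma sumB_bij {d m : ℕ} (h g : Fin d → ℤ) (T' : (Fin d → ℤ) → ℝ) :
    ∑ γ ∈ (Gamma1 d).filter (fun γ => ∀ j, γ j = 0 ∨ γ j = 2 * eF d m h g j - 1),
        T' (emF d m h g γ)
      = ∑ δ ∈ (Fintype.piFinset fun _ : Fin d => ({0, 1} : Finset ℤ)).erase (eF d m h g),
          T' δ := by
  apply Finset.sum_nbij' (i := fun γ => emF d m h g γ)
    (j := fun δ => fun j => if δ j = eF d m h g j then 0 else 2 * eF d m h g j - 1)
  · intro γ hγm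
    rw [Finset.mem_filter] at hγm
    obtain ⟨hg1, hc⟩ := hγm
    obtain ⟨hne, hvals⟩ := mem_Gamma1_iff.mp hg1
    rw [Finset.mem_erase]
    constructor
    · obtain ⟨j, hj⟩ : ∃ j, γ j ≠ 0 := by
        by_contra hcon; push_neg at hcon; exact hne (funext hcon)
      intro hcon
      have hx := congrFun hcon j
      unfold emF at hx
      try beta_reduce at hx
      have hcj := hc j
      have hev := e_cases m h g j
      split_ifs at hx <;> omega
    · simp only [Fintype.mem_piFinset, Finset.mem_insert, Finset.mem_singleton]
      intro j
      unfold emF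
      try beta_reduce
      have hev := e_cases m h g j
      split_ifs <;> omega
  · intro δ hδ
    rw [Finset.mem_erase] at hδ
    obtain ⟨hδne, hδpi⟩ := hδ
    simp only [Fintype.mem_piFinset, Finset.mem_insert, Finset.mem_singleton] at hδpi
    rw [Finset.mem_filter]
    refine ⟨mem_Gamma1_iff.mpr ⟨?_, ?_⟩, ?_⟩
    · obtain ⟨j, hj⟩ : ∃ j, δ j ≠ eF d m h g j := by
        by_contra hcon; push_neg at hcon; exact hδne (funext hcon)
      intro hcon
      have hx := congrFun hcon j
      simp only [Pi.zero_apply] at hx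
      have hev := e_cases m h g j
      split_ifs at hx <;> omega
    · intro j
      try beta_reduce
      have hev := e_cases m h g j
      have hδv := hδpi j
      split_ifs <;> omega
    · intro j
      try beta_reduce
      have hev := e_cases m h g j
      have hδv := hδpi j
      split_ifs <;> omega
  · intro γ hγm
    rw [Finset.mem_filter] at hγm
    obtain ⟨hg1, hc⟩ := hγm
    obtain ⟨hne, hvals⟩ := mem_Gamma1_iff.mp hg1
    funext j
    try beta_reduce
    unfold emF
    try beta_reduce
    have hcj := hc j
    have hev := e_cases m h g j
    have hvj := hvals j
    split_ifs <;> omega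
  · intro δ hδ
    rw [Finset.mem_erase] at hδ
    obtain ⟨hδne, hδpi⟩ := hδ
    simp only [Fintype.mem_piFinset, Finset.mem_insert, Finset.mem_singleton] at hδpi
    funext j
    try beta_reduce
    unfold emF
    try beta_reduce
    have hev := e_cases m h g j
    have hδv := hδpi j
    split_ifs <;> first | omega | simp_all
  · intro γ _
    rfl

lemma sumA_bij {d m : ℕ} (h g : Fin d → ℤ) (T' : (Fin d → ℤ) → ℝ) :
    ∑ γ ∈ (Gamma1 d).filter (fun γ => ∀ j, γ j = 0 ∨ γ j = 1 - 2 * eF d m h g j),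
        T' (emF d m h g γ)
      = ∑ _δ ∈ (Fintype.piFinset fun _ : Fin d => ({0, 1} : Finset ℤ)).erase (eF d m h g),
          T' (eF d m h g) := by
  apply Finset.sum_nbij'
    (i := fun γ => fun j => if γ j = 0 then eF d m h g j else 1 - eF d m h g j)
    (j := fun δ => fun j => if δ j = eF d m h g j then 0 else 1 - 2 * eF d m h g j)
  · intro γ hγm
    rw [Finset.mem_filter] at hγm
    obtain ⟨hg1, hc⟩ := hγm
    obtain ⟨hne, hvals⟩ := mem_Gamma1_iff.mp hg1
    rw [Finset.mem_erase]
    constructor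
    · obtain ⟨j, hj⟩ : ∃ j, γ j ≠ 0 := by
        by_contra hcon; push_neg at hcon; exact hne (funext hcon)
      intro hcon
      have hx := congrFun hcon j
      try beta_reduce at hx
      have hcj := hc j
      have hev := e_cases m h g j
      split_ifs at hx <;> omega
    · simp only [Fintype.mem_piFinset, Finset.mem_insert, Finset.mem_singleton]
      intro j
      try beta_reduce
      have hev := e_cases m h g j
      split_ifs <;> omega
  · intro δ hδ
    rw [Finset.mem_erase] at hδ
    obtain ⟨hδne, hδpi⟩ := hδ
    simp only [Fintype.mem_piFinset, Finset.mem_insert, Finset.mem_singleton] at hδpi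
    rw [Finset.mem_filter]
    refine ⟨mem_Gamma1_iff.mpr ⟨?_, ?_⟩, ?_⟩
    · obtain ⟨j, hj⟩ : ∃ j, δ j ≠ eF d m h g j := by
        by_contra hcon; push_neg at hcon; exact hδne (funext hcon)
      intro hcon
      have hx := congrFun hcon j
      simp only [Pi.zero_apply] at hx
      have hev := e_cases m h g j
      split_ifs at hx <;> omega
    · intro j
      try beta_reduce
      have hev := e_cases m h g j
      have hδv := hδpi j
      split_ifs <;> omega
    · intro j
      try beta_reduce
      have hev := e_cases m h g j
      have hδv := hδpi j
      split_ifs <;> omega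
  · intro γ hγm
    rw [Finset.mem_filter] at hγm
    obtain ⟨hg1, hc⟩ := hγm
    obtain ⟨hne, hvals⟩ := mem_Gamma1_iff.mp hg1
    funext j
    try beta_reduce
    have hcj := hc j
    have hev := e_cases m h g j
    have hvj := hvals j
    split_ifs <;> omega
  · intro δ hδ
    rw [Finset.mem_erase] at hδ
    obtain ⟨hδne, hδpi⟩ := hδ
    simp only [Fintype.mem_piFinset, Finset.mem_insert, Finset.mem_singleton] at hδpi
    funext j
    try beta_reduce
    have hev := e_cases m h g j
    have hδv := hδpi j
    split_ifs <;> omega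
  · intro γ hγm
    rw [Finset.mem_filter] at hγm
    obtain ⟨hg1, hc⟩ := hγm
    have hrw : emF d m h g γ = eF d m h g := by
      funext j
      unfold emF
      try beta_reduce
      have hcj := hc j
      have hev := e_cases m h g j
      split_ifs <;> omega
    rw [hrw]

lemma blockSum_m_eq {X : Type*} (d m : ℕ) (a : (Fin d → ℤ) → X → X) (f : X → ℝ) (x : X)
    (h g : Fin d → ℤ) :
    blockSum d a f x m h g = TF d m a f x h g (eF d m h g) := by
  have hM : (0:ℤ) < 2 ^ m := by positivity
  have hlb : latticeBase d m h g = fun j => g j - cF d m h g j + 2 ^ m * eF d m h g j := by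
    funext j
    have hcf := c_facts d m h g j
    show g j - (g j - h j) % 2 ^ m = _
    exact coord_base0 hM (c_dvd d m h g j) ⟨hcf.1, hcf.2.1⟩ hcf.2.2.1
  unfold blockSum TF
  apply Finset.sum_congr rfl
  intro s _
  have hv : latticeBase d m h g + s =
      fun j => g j - cF d m h g j + 2 ^ m * eF d m h g j + s j := by
    rw [hlb]; funext j; simp
  rw [hv]

lemma blockSum_succ_eq {X : Type*} (d m : ℕ) (a : (Fin d → ℤ) → X → X) (f : X → ℝ) (x : X)
    (h g : Fin d → ℤ) :
    blockSum d a f x (m+1) h g =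
      ∑ δ ∈ Fintype.piFinset (fun _ : Fin d => ({0, 1} : Finset ℤ)), TF d m a f x h g δ := by
  have hlb : latticeBase d (m+1) h g = fun j => g j - cF d m h g j := by
    funext j
    show g j - (g j - h j) % 2 ^ (m+1) = _
    rw [show ((2:ℤ) ^ (m+1)) = 2 * 2 ^ m from by ring]
    rfl
  unfold blockSum
  rw [show (2:ℕ) ^ (m+1) = 2 * 2 ^ m from by rw [pow_succ]; ring]
  rw [box_split (2 ^ m) (by positivity) (fun r => f (a (latticeBase d (m+1) h g + r) x))]
  apply Finset.sum_congr rfl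
  intro δ _
  apply Finset.sum_congr rfl
  intro t _
  have hv : latticeBase d (m+1) h g + (fun j => ((2 ^ m : ℕ) : ℤ) * δ j + t j) =
      fun j => g j - cF d m h g j + 2 ^ m * δ j + t j := by
    rw [hlb]; funext j; push_cast; simp; ring
  rw [hv]

lemma step_lemma {X : Type*} (d m : ℕ) (a : (Fin d → ℤ) → X → X) (f : X → ℝ) (x : X)
    (h g : Fin d → ℤ) :
    (1 / 2 ^ (m * d)) * blockSum d a f x m h g -
      ∑ γ ∈ Gamma1 d, (phiFlow d a f x (m+1) h g γ - phiFlow d a f x (m+1) h (g + γ) (-γ))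
      = (1 / 2 ^ ((m+1) * d)) * blockSum d a f x (m+1) h g := by
  classical
  have hsum1 : ∀ γ ∈ Gamma1 d,
      phiFlow d a f x (m+1) h g γ - phiFlow d a f x (m+1) h (g + γ) (-γ)
        = ((Uidx d (m+1) h g γ).card : ℝ) / 2 ^ ((m+1) * d) * TF d m a f x h g (emF d m h g γ)
          - ((Uidx d (m+1) h g γ).card : ℝ) / 2 ^ ((m+1) * d)
            * TF d m a f x h g (epF d m h g γ) := by
    intro γ hγm
    have hvals := (mem_Gamma1_iff.mp hγm).2
    rw [phi_eval d m a f x h g γ hvals, phi_plus_eval d m a f x h g γ hvals]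
  rw [Finset.sum_congr rfl hsum1, Finset.sum_sub_distrib]
  have hsum2 : ∑ γ ∈ Gamma1 d,
      ((Uidx d (m+1) h g γ).card : ℝ) / 2 ^ ((m+1) * d) * TF d m a f x h g (epF d m h g γ)
      = ∑ γ ∈ Gamma1 d,
        ((Uidx d (m+1) h g (-γ)).card : ℝ) / 2 ^ ((m+1) * d)
          * TF d m a f x h g (emF d m h g γ) := by
    apply Finset.sum_nbij' (i := fun γ => -γ) (j := fun γ => -γ)
    · intro γ hγm; exact neg_mem_Gamma1 hγm
    · intro γ hγm; exact neg_mem_Gamma1 hγm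
    · intro γ _; simp
    · intro γ _; simp
    · intro γ hγm
      have hvals := (mem_Gamma1_iff.mp hγm).2
      have hrw : emF d m h g (-γ) = epF d m h g γ := by
        funext j
        unfold emF epF
        simp only [Pi.neg_apply]
        have := hvals j
        split_ifs <;> omega
      rw [neg_neg, hrw]
  rw [hsum2, ← Finset.sum_sub_distrib]
  have hsum3 : ∑ γ ∈ Gamma1 d,
      (((Uidx d (m+1) h g γ).card : ℝ) / 2 ^ ((m+1) * d) * TF d m a f x h g (emF d m h g γ)
        - ((Uidx d (m+1) h g (-γ)).card : ℝ) / 2 ^ ((m+1) * d)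
          * TF d m a f x h g (emF d m h g γ))
      = (1 / 2 ^ ((m+1) * d)) *
          ((∑ γ ∈ Gamma1 d, if ∀ j, γ j = 0 ∨ γ j = 1 - 2 * eF d m h g j then
              TF d m a f x h g (emF d m h g γ) else 0)
            - ∑ γ ∈ Gamma1 d, if ∀ j, γ j = 0 ∨ γ j = 2 * eF d m h g j - 1 then
              TF d m a f x h g (emF d m h g γ) else 0) := by
    rw [mul_sub, Finset.mul_sum, Finset.mul_sum, ← Finset.sum_sub_distrib]
    apply Finset.sum_congr rfl
    intro γ hγm
    obtain ⟨hne, hvals⟩ := mem_Gamma1_iff.mp hγm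
    have hcs := card_sub d m h g γ hvals hne
    have hcsR : ((Uidx d (m+1) h g γ).card : ℝ) - ((Uidx d (m+1) h g (-γ)).card : ℝ)
        = (if ∀ j, γ j = 0 ∨ γ j = 1 - 2 * eF d m h g j then (1:ℝ) else 0)
          - (if ∀ j, γ j = 0 ∨ γ j = 2 * eF d m h g j - 1 then (1:ℝ) else 0) := by
      by_cases hc1 : ∀ j, γ j = 0 ∨ γ j = 1 - 2 * eF d m h g j <;>
        by_cases hc2 : ∀ j, γ j = 0 ∨ γ j = 2 * eF d m h g j - 1
      · rw [if_pos hc1, if_pos hc2] at hcs ⊢; exact_mod_cast hcs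
      · rw [if_pos hc1, if_neg hc2] at hcs ⊢; exact_mod_cast hcs
      · rw [if_neg hc1, if_pos hc2] at hcs ⊢; exact_mod_cast hcs
      · rw [if_neg hc1, if_neg hc2] at hcs ⊢; exact_mod_cast hcs
    have hsplit : ((Uidx d (m+1) h g γ).card : ℝ) / 2 ^ ((m+1) * d)
          * TF d m a f x h g (emF d m h g γ)
        - ((Uidx d (m+1) h g (-γ)).card : ℝ) / 2 ^ ((m+1) * d)
          * TF d m a f x h g (emF d m h g γ)
        = (1 / 2 ^ ((m+1) * d)) *
            ((((Uidx d (m+1) h g γ).card : ℝ) - ((Uidx d (m+1) h g (-γ)).card : ℝ))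
              * TF d m a f x h g (emF d m h g γ)) := by ring
    rw [hsplit, hcsR]
    split_ifs <;> ring
  rw [hsum3, ← Finset.sum_filter, ← Finset.sum_filter, sumA_bij h g (TF d m a f x h g),
    sumB_bij h g (TF d m a f x h g)]
  rw [Finset.sum_const]
  rw [Finset.sum_erase_eq_sub (e_mem_pi h g)]
  rw [Finset.card_erase_of_mem (e_mem_pi h g)]
  rw [Fintype.card_piFinset]
  have hc2 : ({0, 1} : Finset ℤ).card = 2 := by decide
  simp only [hc2, Finset.prod_const, Finset.card_univ, Fintype.card_fin]
  rw [blockSum_m_eq d m a f x h g, blockSum_succ_eq d m a f x h g]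
  have hcast : ((2 ^ d - 1 : ℕ) : ℝ) = 2 ^ d - 1 := by
    have : (1:ℕ) ≤ 2 ^ d := Nat.one_le_two_pow
    push_cast [this]
    ring
  rw [nsmul_eq_mul, hcast]
  have hD : (2:ℝ) ^ ((m+1) * d) = 2 ^ (m * d) * 2 ^ d := by
    rw [show (m+1) * d = m * d + d from by ring, pow_add]
  rw [hD]
  have h1 : (2:ℝ) ^ (m * d) ≠ 0 := by positivity
  have h2 : (2:ℝ) ^ d ≠ 0 := by positivity
  field_simp
  ring

lemma blockSum_zero {X : Type*} (d : ℕ) (a : (Fin d → ℤ) → X → X) (f : X → ℝ) (x : X)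
    (h g : Fin d → ℤ) :
    blockSum d a f x 0 h g = f (a g x) := by
  unfold blockSum
  have hlb : latticeBase d 0 h g = g := by
    funext j
    show g j - (g j - h j) % 2 ^ 0 = g j
    simp [Int.emod_one]
  have hbox : boxZ d (2 ^ 0) = {fun _ => 0} := by
    ext r
    simp only [pow_zero, mem_boxZ, Finset.mem_singleton, funext_iff]
    constructor
    · intro hr j; have := hr j; push_cast at this; omega
    · intro hr j; rw [hr j]; norm_num
  rw [hbox, Finset.sum_singleton, hlb]
  have : g + (fun _ : Fin d => (0:ℤ)) = g := by funext j; simp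
  rw [this]

lemma blockSum_congr {X : Type*} (d n : ℕ) (a : (Fin d → ℤ) → X → X) (f : X → ℝ) (x : X)
    (h h' g : Fin d → ℤ) (hcong : ∀ j, ((2:ℤ) ^ n) ∣ (h j - h' j)) :
    blockSum d a f x n h g = blockSum d a f x n h' g := by
  have hlb : latticeBase d n h g = latticeBase d n h' g := by
    funext j
    show g j - (g j - h j) % 2 ^ n = g j - (g j - h' j) % 2 ^ n
    have hmodeq : h j ≡ h' j [ZMOD (2:ℤ)^n] := by
      rw [Int.ModEq, Int.emod_eq_emod_iff_emod_sub_eq_zero]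
      exact Int.emod_eq_zero_of_dvd (hcong j)
    have : (g j - h j) % 2 ^ n = (g j - h' j) % 2 ^ n :=
      Int.ModEq.sub (Int.ModEq.refl (g j)) hmodeq
    rw [this]
  unfold blockSum
  rw [hlb]

end MLaux


/-- **The error lemma.** For a free action `a : ℤᵈ ↷ X`, a compatible sequence
`(h_0, h_1, …)` in the inverse limit of `ℤᵈ/(2ⁱℤ)ᵈ` (given by representatives with
`h_i ≡ h_{i−1} mod 2^{i−1}`), every `n > 0` and every point `y = a g x` of the orbit
of `x`:
`f(y) − ∑_{‖γ‖_∞ = 1} ψ_{x,(h_0,…,h_n)}(y, γ·y) = 2^{−nd} ∑_{z ∈ [y]_{(x,h_n)}} f(z)`. -/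
theorem error_lemma {X : Type*} (d : ℕ) (hd : 1 ≤ d)
    (a : (Fin d → ℤ) → X → X)
    (ha0 : ∀ x : X, a 0 x = x)
    (haadd : ∀ (g g' : Fin d → ℤ) (x : X), a (g + g') x = a g (a g' x))
    (hfree : ∀ (g : Fin d → ℤ) (x : X), a g x = x → g = 0)
    (f : X → ℝ) (x : X)
    (h : ℕ → Fin d → ℤ)
    (hcompat : ∀ i : ℕ, 0 < i → ∀ j : Fin d, ((2 : ℤ) ^ (i - 1)) ∣ (h i j - h (i - 1) j))
    (n : ℕ) (hn : 0 < n) (g : Fin d → ℤ) :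
    f (a g x) - ∑ γ ∈ Gamma1 d, psiSeq d a f x h n g γ
      = (1 / 2 ^ (n * d)) * blockSum d a f x n (h n) g := by
  have key : ∀ k : ℕ,
      f (a g x) - ∑ γ ∈ Gamma1 d, psiSeq d a f x h k g γ
        = (1 / 2 ^ (k * d)) * blockSum d a f x k (h k) g := by
    intro k
    induction k with
    | zero =>
      have hpsi : ∀ γ : Fin d → ℤ, psiSeq d a f x h 0 g γ = 0 := by
        intro γ; unfold psiSeq; simp
      simp only [hpsi, Finset.sum_const_zero, sub_zero]
      rw [MLaux.blockSum_zero d a f x (h 0) g]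
      norm_num
    | succ k ih =>
      have hpsi : ∀ γ : Fin d → ℤ, psiSeq d a f x h (k+1) g γ = psiSeq d a f x h k g γ +
          (phiFlow d a f x (k+1) (h (k+1)) g γ -
            phiFlow d a f x (k+1) (h (k+1)) (g + γ) (-γ)) := by
        intro γ
        unfold psiSeq
        rw [Finset.sum_Icc_succ_top (by omega : 1 ≤ k + 1)]
      simp only [hpsi]
      rw [Finset.sum_add_distrib]
      have hcong : blockSum d a f x k (h k) g = blockSum d a f x k (h (k+1)) g := by
        apply MLaux.blockSum_congr
        intro j
        have h1 : (2:ℤ)^k ∣ h (k+1) j - h k j := by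
          simpa using hcompat (k+1) (Nat.succ_pos k) j
        exact (dvd_sub_comm).mp h1
      calc f (a g x) - (∑ γ ∈ Gamma1 d, psiSeq d a f x h k g γ +
            ∑ γ ∈ Gamma1 d, (phiFlow d a f x (k+1) (h (k+1)) g γ -
              phiFlow d a f x (k+1) (h (k+1)) (g + γ) (-γ)))
          = (f (a g x) - ∑ γ ∈ Gamma1 d, psiSeq d a f x h k g γ) -
              ∑ γ ∈ Gamma1 d, (phiFlow d a f x (k+1) (h (k+1)) g γ -
                phiFlow d a f x (k+1) (h (k+1)) (g + γ) (-γ)) := by ring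
        _ = (1 / 2 ^ (k * d)) * blockSum d a f x k (h k) g -
              ∑ γ ∈ Gamma1 d, (phiFlow d a f x (k+1) (h (k+1)) g γ -
                phiFlow d a f x (k+1) (h (k+1)) (g + γ) (-γ)) := by rw [ih]
        _ = (1 / 2 ^ (k * d)) * blockSum d a f x k (h (k+1)) g -
              ∑ γ ∈ Gamma1 d, (phiFlow d a f x (k+1) (h (k+1)) g γ -
                phiFlow d a f x (k+1) (h (k+1)) (g + γ) (-γ)) := by rw [hcong]
        _ = (1 / 2 ^ ((k+1) * d)) * blockSum d a f x (k+1) (h (k+1)) g :=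
          MLaux.step_lemma d k a f x (h (k+1)) g
  exact key n
end
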